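/- arXiv:1512.05446 — 4 statements merged into one kernel-verified Lean document; each statement's English description precedes it below -/
import Mathlib

section
/- If Y is the maximum of k i.i.d. random variables from the PRHR model F(x) = F0(x)^{1/γ}, then −(1/m)Σ ki·log F0(Yi), computed over m independent such maxima Yi with set sizes ki, is an unbiased estimator of γ with variance γ²/m. -/
open MeasureTheory ProbabilityTheory Real
open Set Filter Topology

set_option linter.unusedTactic false

lemma prhr_aux
    {Ω : Type*} [MeasureSpace Ω] [IsProbabilityMeasure (ℙ : Measure Ω)]
    (γ : ℝ) (hγ : 0 < γ)
    (F0 : ℝ → ℝ) (hF0mono : Monotone F0) (hF0cont : Continuous F0)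
    (hF0bot : Filter.Tendsto F0 Filter.atBot (nhds 0))
    (hF0top : Filter.Tendsto F0 Filter.atTop (nhds 1))
    (n : ℕ) (hn : 1 ≤ n)
    (W : Ω → ℝ) (hW : Measurable W)
    (hcdf : ∀ x, (ℙ {ω | W ω ≤ x}).toReal = ((F0 x) ^ (1 / γ)) ^ n) :
    Integrable (fun ω => -((n : ℝ) * Real.log (F0 (W ω)))) ℙ ∧
    (∫ ω, -((n : ℝ) * Real.log (F0 (W ω))) ∂ℙ) = γ ∧
    MemLp (fun ω => -((n : ℝ) * Real.log (F0 (W ω)))) 2 ℙ ∧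
    variance (fun ω => -((n : ℝ) * Real.log (F0 (W ω)))) ℙ = γ ^ 2 := by
  set Z : Ω → ℝ := fun ω => -((n : ℝ) * Real.log (F0 (W ω))) with hZ
  have hn0 : (0 : ℝ) < n := by exact_mod_cast hn
  have hr : (0 : ℝ) < 1 / γ := by positivity
  have hF0nn : ∀ x, 0 ≤ F0 x := fun x =>
    le_of_tendsto hF0bot (eventually_atBot.2 ⟨x, fun y hy => hF0mono hy⟩)
  have hF0le1 : ∀ x, F0 x ≤ 1 := fun x =>
    ge_of_tendsto hF0top (eventually_atTop.2 ⟨x, fun y hy => hF0mono hy⟩)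
  have hZnn : ∀ ω, 0 ≤ Z ω := fun ω => by
    have := Real.log_nonpos (hF0nn (W ω)) (hF0le1 (W ω))
    simp only [hZ]; nlinarith
  have hZmeas : Measurable Z :=
    ((measurable_const.mul (Real.measurable_log.comp (hF0cont.measurable.comp hW)))).neg
  have hPW : ∀ x, ℙ {ω | W ω ≤ x} = ENNReal.ofReal (((F0 x) ^ (1 / γ)) ^ n) := fun x => by
    rw [← hcdf x, ENNReal.ofReal_toReal (measure_ne_top _ _)]
  -- null set where F0 (W ω) = 0
  have hnull : ℙ {ω | F0 (W ω) ≤ 0} = 0 := by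
    by_cases hS : ∃ x, F0 x ≤ 0
    · obtain ⟨x0, hx0⟩ := hS
      set S := {x : ℝ | F0 x ≤ 0} with hSdef
      have hclosed : IsClosed S := isClosed_le hF0cont continuous_const
      obtain ⟨x1, hx1⟩ := (hF0top.eventually (eventually_gt_nhds one_pos)).exists
      have hbdd : BddAbove S := by
        refine ⟨x1, fun y hy => ?_⟩
        by_contra hlt
        push_neg at hlt
        exact absurd (le_trans (hF0mono hlt.le) hy) (not_le.2 hx1)
      have hne : S.Nonempty := ⟨x0, hx0⟩
      have hb : sSup S ∈ S := hclosed.csSup_mem hne hbdd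
      have hSeq : {ω | F0 (W ω) ≤ 0} = {ω | W ω ≤ sSup S} := by
        ext ω
        simp only [mem_setOf_eq]
        exact ⟨fun h => le_csSup hbdd h, fun h => le_trans (hF0mono h) hb⟩
      have hF0b : F0 (sSup S) = 0 := le_antisymm hb (hF0nn _)
      rw [hSeq, hPW, hF0b, Real.zero_rpow (ne_of_gt hr), zero_pow (by omega), ENNReal.ofReal_zero]
    · push_neg at hS
      have : {ω | F0 (W ω) ≤ 0} = (∅ : Set Ω) := by
        ext ω; simp only [mem_setOf_eq, mem_empty_iff_false, iff_false, not_le]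
        exact hS _
      rw [this]; exact measure_empty
  -- tail probability
  have htail : ∀ t : ℝ, 0 < t →
      ℙ {ω | t < Z ω} = ENNReal.ofReal (Real.exp (-(1 / γ * t))) := by
    intro t ht
    set u := Real.exp (-(t / n)) with hu
    have hu0 : 0 < u := Real.exp_pos _
    have hu1 : u < 1 := by
      rw [hu, Real.exp_lt_one_iff]
      have : 0 < t / n := by positivity
      linarith
    -- key identity for the powers of u
    have hupow : (u ^ (1 / γ)) ^ n = Real.exp (-(1 / γ * t)) := by
      rw [hu, ← Real.exp_mul, ← Real.exp_nat_mul]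
      congr 1
      field_simp
    -- the set {x | u ≤ F0 x}
    set S := {x : ℝ | u ≤ F0 x} with hSdef
    have hclosed : IsClosed S := isClosed_le continuous_const hF0cont
    have hSne : S.Nonempty := by
      obtain ⟨x1, hx1⟩ := (hF0top.eventually (eventually_gt_nhds hu1)).exists
      exact ⟨x1, hx1.le⟩
    obtain ⟨x0, hx0⟩ := (hF0bot.eventually (eventually_lt_nhds hu0)).exists
    have hSbdd : BddBelow S := by
      refine ⟨x0, fun y hy => ?_⟩
      by_contra hlt
      push_neg at hlt
      exact absurd (le_trans hy (hF0mono hlt.le)) (not_le.2 hx0)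
    set a := sInf S with ha
    have haS : a ∈ S := hclosed.csInf_mem hSne hSbdd
    have hSIci : S = Ici a := by
      apply Subset.antisymm (fun x hx => csInf_le hSbdd hx)
      intro x hx
      exact le_trans haS (hF0mono hx)
    have hF0a : F0 a = u := by
      refine le_antisymm ?_ haS
      have hseq : Tendsto (fun j : ℕ => a - 1 / (j + 1)) atTop (𝓝 a) := by
        have := tendsto_one_div_add_atTop_nhds_zero_nat (𝕜 := ℝ)
        simpa using tendsto_const_nhds.sub this
      have hcv : Tendsto (fun j : ℕ => F0 (a - 1 / (j + 1))) atTop (𝓝 (F0 a)) :=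
        (hF0cont.continuousAt.tendsto).comp hseq
      refine le_of_tendsto hcv (Eventually.of_forall fun j => ?_)
      have hlt : a - 1 / (j + 1 : ℝ) < a := by
        have : (0:ℝ) < 1 / (j + 1) := by positivity
        linarith
      have : a - 1 / (j + 1 : ℝ) ∉ S := fun hmem => absurd (csInf_le hSbdd hmem) (not_le.2 hlt)
      simp only [hSdef, mem_setOf_eq, not_le] at this
      exact this.le
    -- probability of {W < a}
    have hWlt : ℙ {ω | W ω < a} = ENNReal.ofReal ((u ^ (1 / γ)) ^ n) := by
      have hUnion : {ω | W ω < a} = ⋃ j : ℕ, {ω | W ω ≤ a - 1 / (j + 1)} := by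
        ext ω
        simp only [mem_setOf_eq, mem_iUnion]
        constructor
        · intro h
          obtain ⟨j, hj⟩ := exists_nat_one_div_lt (sub_pos.2 h)
          exact ⟨j, by push_cast at hj ⊢; linarith⟩
        · rintro ⟨j, hj⟩
          have : (0:ℝ) < 1 / (j + 1) := by positivity
          linarith
      have hmono : Monotone fun j : ℕ => {ω | W ω ≤ a - 1 / (j + 1 : ℝ)} := by
        intro i j hij ω hω
        simp only [mem_setOf_eq] at *
        have h1 : (1:ℝ) / (j + 1) ≤ 1 / (i + 1) := by
          apply one_div_le_one_div_of_le (by positivity)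
          exact_mod_cast Nat.succ_le_succ hij
        linarith
      have hT := tendsto_measure_iUnion_atTop (μ := ℙ) hmono
      have hT2 : Tendsto (fun j : ℕ => ℙ {ω | W ω ≤ a - 1 / (j + 1)}) atTop
          (𝓝 (ENNReal.ofReal ((u ^ (1 / γ)) ^ n))) := by
        simp_rw [hPW]
        have hcont : ContinuousAt (fun v : ℝ => ENNReal.ofReal ((v ^ (1 / γ)) ^ n)) (F0 a) := by
          apply ENNReal.continuous_ofReal.continuousAt.comp
          exact ((Real.continuousAt_rpow_const _ _ (Or.inr hr.le)).pow n)
        have hseq : Tendsto (fun j : ℕ => a - 1 / (j + 1)) atTop (𝓝 a) := by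
          have := tendsto_one_div_add_atTop_nhds_zero_nat (𝕜 := ℝ)
          simpa using tendsto_const_nhds.sub this
        have := hcont.tendsto.comp ((hF0cont.continuousAt.tendsto).comp hseq)
        rw [hF0a] at this
        exact this
      rw [hUnion]
      exact tendsto_nhds_unique hT hT2
    -- split {Z ≤ t}
    have hsplit : {ω | Z ω ≤ t} = {ω | u ≤ F0 (W ω)} ∪ {ω | F0 (W ω) ≤ 0} := by
      ext ω
      simp only [mem_setOf_eq, mem_union, hZ]
      constructor
      · intro h
        rcases le_or_gt (F0 (W ω)) 0 with h0 | h0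
        · exact Or.inr h0
        · left
          have h2 : -(t / (n:ℝ)) ≤ Real.log (F0 (W ω)) := by
            rw [← neg_div, div_le_iff₀ hn0]
            nlinarith
          calc u = Real.exp (-(t / n)) := hu
            _ ≤ Real.exp (Real.log (F0 (W ω))) := Real.exp_le_exp.2 h2
            _ = F0 (W ω) := Real.exp_log h0
      · rintro (h | h)
        · have hlog : -(t / (n:ℝ)) ≤ Real.log (F0 (W ω)) := by
            calc -(t / (n:ℝ)) = Real.log u := by rw [hu, Real.log_exp]
              _ ≤ Real.log (F0 (W ω)) := Real.log_le_log hu0 h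
          have := mul_le_mul_of_nonneg_left hlog hn0.le
          rw [mul_neg, mul_div_cancel₀ t (ne_of_gt hn0)] at this
          linarith
        · have h0 : F0 (W ω) = 0 := le_antisymm h (hF0nn _)
          rw [h0, Real.log_zero, mul_zero, neg_zero]
          exact ht.le
    have hle : ℙ {ω | Z ω ≤ t} = ENNReal.ofReal (1 - (u ^ (1 / γ)) ^ n) := by
      have h1 : ℙ ({ω | u ≤ F0 (W ω)} ∪ {ω | F0 (W ω) ≤ 0}) = ℙ {ω | u ≤ F0 (W ω)} := by
        apply le_antisymm
        · calc ℙ ({ω | u ≤ F0 (W ω)} ∪ {ω | F0 (W ω) ≤ 0})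
              ≤ ℙ {ω | u ≤ F0 (W ω)} + ℙ {ω | F0 (W ω) ≤ 0} := measure_union_le _ _
            _ = ℙ {ω | u ≤ F0 (W ω)} := by rw [hnull, add_zero]
        · exact measure_mono subset_union_left
      have h2 : {ω | u ≤ F0 (W ω)} = {ω | W ω < a}ᶜ := by
        ext ω
        simp only [mem_setOf_eq, mem_compl_iff, not_lt]
        constructor
        · intro h; have : W ω ∈ S := h; rw [hSIci] at this; exact this
        · intro h
          have : W ω ∈ S := by rw [hSIci]; exact h
          exact this
      have hmeasset : MeasurableSet {ω | W ω < a} := hW measurableSet_Iio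
      rw [hsplit, h1, h2, measure_compl hmeasset (measure_ne_top _ _), hWlt, measure_univ]
      rw [← ENNReal.ofReal_one, ← ENNReal.ofReal_sub]
      positivity
    have hcompl : {ω | t < Z ω} = {ω | Z ω ≤ t}ᶜ := by
      ext ω; simp [not_le]
    have hmeasZle : MeasurableSet {ω | Z ω ≤ t} := hZmeas measurableSet_Iic
    rw [hcompl, measure_compl hmeasZle (measure_ne_top _ _), measure_univ, hle,
      ← ENNReal.ofReal_one, ← ENNReal.ofReal_sub, ← hupow]
    · congr 1; ring
    · have h1 : (u ^ (1 / γ)) ^ n ≤ 1 := by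
        apply pow_le_one₀ (by positivity)
        exact Real.rpow_le_one hu0.le hu1.le hr.le
      linarith
  -- first lintegral
  have hI1 : ∫⁻ ω, ENNReal.ofReal (Z ω) ∂ℙ = ENNReal.ofReal γ := by
    rw [lintegral_eq_lintegral_meas_lt ℙ (ae_of_all _ hZnn) hZmeas.aemeasurable]
    have hcong : ∫⁻ t in Ioi (0:ℝ), ℙ {a | t < Z a} =
        ∫⁻ t in Ioi (0:ℝ), ENNReal.ofReal (Real.exp (-(1 / γ * t))) := by
      apply setLIntegral_congr_fun measurableSet_Ioi
      exact fun t ht => htail t ht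
    rw [hcong]
    have hint : IntegrableOn (fun t : ℝ => Real.exp (-(1 / γ * t))) (Ioi 0) := by
      have h := integrableOn_rpow_mul_exp_neg_mul_rpow (by norm_num : (-1:ℝ) < 0) zero_lt_one hr
      simpa [Real.rpow_zero, Real.rpow_one, neg_mul] using h
    rw [← ofReal_integral_eq_lintegral_ofReal hint (ae_of_all _ fun t => (Real.exp_pos _).le)]
    congr 1
    have := integral_rpow_mul_exp_neg_mul_Ioi (by norm_num : (0:ℝ) < 1) hr
    simp only [sub_self, Real.rpow_zero, one_mul, Real.rpow_one] at this
    rw [this, Real.Gamma_one, mul_one, one_div_one_div]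
  have hZint : Integrable Z ℙ := by
    refine ⟨hZmeas.aestronglyMeasurable, ?_⟩
    rw [hasFiniteIntegral_iff_ofReal (ae_of_all _ hZnn), hI1]
    exact ENNReal.ofReal_lt_top
  have hEZ : ∫ ω, Z ω ∂ℙ = γ := by
    rw [integral_eq_lintegral_of_nonneg_ae (ae_of_all _ hZnn) hZmeas.aestronglyMeasurable, hI1,
      ENNReal.toReal_ofReal hγ.le]
  -- second moment
  have hI2 : ∫⁻ ω, ENNReal.ofReal (Z ω ^ 2) ∂ℙ = ENNReal.ofReal (2 * γ ^ 2) := by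
    have hkey := lintegral_comp_eq_lintegral_meas_lt_mul ℙ (f := Z) (g := fun t => 2 * t)
      (ae_of_all _ hZnn) hZmeas.aemeasurable
      (fun t _ => (continuous_const.mul continuous_id).intervalIntegrable 0 t)
      ((ae_restrict_iff' measurableSet_Ioi).2 (ae_of_all _ fun t ht => by
        simp only [mem_Ioi] at ht; positivity))
    have hsq : ∀ x : ℝ, (∫ s in (0:ℝ)..x, 2 * s) = x ^ 2 := fun x => by
      rw [intervalIntegral.integral_const_mul, integral_id]; ring
    simp_rw [hsq] at hkey
    rw [hkey]
    have hcong : ∫⁻ t in Ioi (0:ℝ), ℙ {a | t < Z a} * ENNReal.ofReal (2 * t) =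
        ∫⁻ t in Ioi (0:ℝ), ENNReal.ofReal (Real.exp (-(1 / γ * t)) * (2 * t)) := by
      apply setLIntegral_congr_fun measurableSet_Ioi
      refine fun t ht => ?_
      dsimp only
      rw [htail t ht, ← ENNReal.ofReal_mul (Real.exp_pos _).le]
    rw [hcong]
    have hint : IntegrableOn (fun t : ℝ => Real.exp (-(1 / γ * t)) * (2 * t)) (Ioi 0) := by
      have h : IntegrableOn (fun x : ℝ => 2 * (x ^ (1:ℝ) * Real.exp (-(1 / γ) * x ^ (1:ℝ))))
          (Ioi 0) volume := (integrableOn_rpow_mul_exp_neg_mul_rpow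
        (by norm_num : (-1:ℝ) < 1) zero_lt_one hr).const_mul 2
      refine h.congr_fun (fun x hx => ?_) measurableSet_Ioi
      simp only [Real.rpow_one, neg_mul]
      ring
    rw [← ofReal_integral_eq_lintegral_ofReal hint
      ((ae_restrict_iff' measurableSet_Ioi).2 (ae_of_all _ fun t ht => by
        simp only [mem_Ioi] at ht; positivity))]
    congr 1
    have hval := integral_rpow_mul_exp_neg_mul_Ioi (by norm_num : (0:ℝ) < 2) hr
    calc ∫ t in Ioi (0:ℝ), Real.exp (-(1 / γ * t)) * (2 * t)
        = ∫ t in Ioi (0:ℝ), 2 * (t ^ ((2:ℝ) - 1) * Real.exp (-(1 / γ * t))) := by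
          apply setIntegral_congr_fun measurableSet_Ioi
          intro t ht
          simp only [show (2:ℝ) - 1 = 1 by norm_num, Real.rpow_one]
          ring
      _ = 2 * ((1 / (1 / γ)) ^ (2:ℝ) * Real.Gamma 2) := by rw [integral_const_mul, hval]
      _ = 2 * γ ^ 2 := by
          rw [one_div_one_div, Real.Gamma_two, mul_one,
            show ((2:ℝ)) = ((2:ℕ):ℝ) by norm_num, Real.rpow_natCast]
  have hZsqmeas : Measurable (fun ω => Z ω ^ 2) := hZmeas.pow_const 2
  have hZsqint : Integrable (fun ω => Z ω ^ 2) ℙ := by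
    refine ⟨hZsqmeas.aestronglyMeasurable, ?_⟩
    rw [hasFiniteIntegral_iff_ofReal (ae_of_all _ fun ω => sq_nonneg _), hI2]
    exact ENNReal.ofReal_lt_top
  have hEZsq : ∫ ω, Z ω ^ 2 ∂ℙ = 2 * γ ^ 2 := by
    rw [integral_eq_lintegral_of_nonneg_ae (ae_of_all _ fun ω => sq_nonneg _)
      hZsqmeas.aestronglyMeasurable, hI2, ENNReal.toReal_ofReal (by positivity)]
  have hmem : MemLp Z 2 ℙ := (memLp_two_iff_integrable_sq hZmeas.aestronglyMeasurable).2 hZsqint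
  refine ⟨hZint, hEZ, hmem, ?_⟩
  rw [variance_eq_sub hmem]
  simp only [Pi.pow_apply]
  rw [hEZsq, hEZ]
  ring


/-- If `Y i` is the maximum of `k i` i.i.d. random variables from the PRHR
model `F(x) = (F0 x)^(1/γ)` (so `Y i` has CDF `((F0 x)^(1/γ))^(k i)`), and the `Y i` are
independent, then `-(1/m) Σ (k i) log (F0 (Y i))` is unbiased for `γ` with variance `γ²/m`. -/
theorem prhr_mans_ml_estimator
    {Ω : Type*} [MeasureSpace Ω] [IsProbabilityMeasure (ℙ : Measure Ω)]
    (m : ℕ) (hm : 1 ≤ m) (γ : ℝ) (hγ : 0 < γ)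
    (F0 : ℝ → ℝ) (hF0mono : Monotone F0) (hF0cont : Continuous F0)
    (hF0bot : Filter.Tendsto F0 Filter.atBot (nhds 0))
    (hF0top : Filter.Tendsto F0 Filter.atTop (nhds 1))
    (k : Fin m → ℕ) (hk : ∀ i, 1 ≤ k i)
    (Y : Fin m → Ω → ℝ) (hmeas : ∀ i, Measurable (Y i))
    (hindep : iIndepFun Y ℙ)
    (hmax : ∀ i x, (ℙ {ω | Y i ω ≤ x}).toReal = ((F0 x) ^ (1 / γ)) ^ (k i)) :
    (∫ ω, -(1 / (m : ℝ)) * ∑ i, (k i : ℝ) * Real.log (F0 (Y i ω)) ∂ℙ) = γ ∧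
    variance (fun ω => -(1 / (m : ℝ)) * ∑ i, (k i : ℝ) * Real.log (F0 (Y i ω))) ℙ
      = γ ^ 2 / m := by
  have haux := fun i => prhr_aux γ hγ F0 hF0mono hF0cont hF0bot hF0top (k i) (hk i)
    (Y i) (hmeas i) (hmax i)
  set Z : Fin m → Ω → ℝ := fun i ω => -((k i : ℝ) * Real.log (F0 (Y i ω))) with hZdef
  have hInt : ∀ i, Integrable (Z i) ℙ := fun i => (haux i).1
  have hE : ∀ i, ∫ ω, Z i ω ∂ℙ = γ := fun i => (haux i).2.1
  have hMem : ∀ i, MemLp (Z i) 2 ℙ := fun i => (haux i).2.2.1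
  have hVar : ∀ i, variance (Z i) ℙ = γ ^ 2 := fun i => (haux i).2.2.2
  have hm0 : (m : ℝ) ≠ 0 := by
    have : (0:ℝ) < m := by exact_mod_cast hm
    exact ne_of_gt this
  have hfun : (fun ω => -(1 / (m : ℝ)) * ∑ i, (k i : ℝ) * Real.log (F0 (Y i ω)))
      = fun ω => (1 / (m : ℝ)) * (∑ i, Z i) ω := by
    funext ω
    simp only [Finset.sum_apply, hZdef, Finset.sum_neg_distrib]
    ring
  have hindepZ : iIndepFun Z ℙ :=
    hindep.comp (fun i x => -((k i : ℝ) * Real.log (F0 x)))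
      (fun i => (measurable_const.mul (Real.measurable_log.comp hF0cont.measurable)).neg)
  constructor
  · rw [show (fun ω => -(1 / (m : ℝ)) * ∑ i, (k i : ℝ) * Real.log (F0 (Y i ω)))
        = fun ω => (1 / (m : ℝ)) * (∑ i, Z i) ω from hfun]
    simp only [Finset.sum_apply]
    rw [integral_const_mul, integral_finset_sum _ (fun i _ => hInt i)]
    simp only [hE]
    rw [Finset.sum_const, Finset.card_univ, Fintype.card_fin, nsmul_eq_mul]
    field_simp
  · rw [hfun, variance_const_mul,
      IndepFun.variance_sum (fun i _ => hMem i) (fun i _ j _ hij => hindepZ.indepFun hij)]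
    simp only [hVar]
    rw [Finset.sum_const, Finset.card_univ, Fintype.card_fin, nsmul_eq_mul]
    field_simp
end

section
/- Let Y be an RNS complete-data observation from the PHR model with set size k and indicator z, having density g(y) = k·(1/γ)·f0(y)/(1−F0(y))·((1−F0(y))^{1/γ})^{α−1}·(1 − (1−F0(y))^{1/γ})^{β}, where α = (1−z)(k−1)+2 and β = z(k−1). Then E[log(1−F0(Y))] = γ·k·B(α−1, β+1)·(ψ(α−1) − ψ(α+β)). -/
open MeasureTheory ProbabilityTheory Real

/-- The digamma function `ψ = (log Γ)'`. -/
noncomputable def digamma (x : ℝ) : ℝ := deriv (fun t => Real.log (Real.Gamma t)) x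

/-- The Beta function `B(α, β) = Γ(α) Γ(β) / Γ(α + β)`. -/
noncomputable def betaFn (a b : ℝ) : ℝ := Real.Gamma a * Real.Gamma b / Real.Gamma (a + b)

open Set Filter

lemma digamma_add_one {x : ℝ} (hx : 0 < x) : digamma (x + 1) = digamma x + 1 / x := by
  have hΓd : ∀ y : ℝ, 0 < y → HasDerivAt (fun t => Real.log (Real.Gamma t))
      (deriv (fun t => Real.log (Real.Gamma t)) y) y := by
    intro y hy
    have h1 : DifferentiableAt ℝ Real.Gamma y := by
      apply Real.differentiableAt_Gamma
      intro m
      have : (0:ℝ) ≤ m := Nat.cast_nonneg m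
      nlinarith
    have h2 : Real.Gamma y ≠ 0 := (Real.Gamma_pos_of_pos hy).ne'
    exact (h1.log h2).hasDerivAt
  have heq : (fun t => Real.log (Real.Gamma t)) =ᶠ[nhds (x+1)]
      (fun t => Real.log (t - 1) + Real.log (Real.Gamma (t - 1))) := by
    have hmem : Set.Ioi (1:ℝ) ∈ nhds (x+1) := Ioi_mem_nhds (by linarith)
    filter_upwards [hmem] with t ht
    have ht1 : (0:ℝ) < t - 1 := by simpa [Set.mem_Ioi] using by linarith [Set.mem_Ioi.1 ht]
    have : Real.Gamma t = (t - 1) * Real.Gamma (t - 1) := by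
      conv_lhs => rw [show t = (t-1)+1 by ring]
      rw [Real.Gamma_add_one ht1.ne']
    rw [this, Real.log_mul ht1.ne' (Real.Gamma_pos_of_pos ht1).ne']
  have hder : HasDerivAt (fun t => Real.log (t - 1) + Real.log (Real.Gamma (t - 1)))
      (1 / x + digamma x) (x + 1) := by
    have h1 : HasDerivAt (fun t : ℝ => Real.log (t - 1)) (1 / x) (x + 1) := by
      have : HasDerivAt (fun t : ℝ => t - 1) 1 (x + 1) := (hasDerivAt_id _).sub_const 1
      have hl : HasDerivAt Real.log x⁻¹ (x + 1 - 1) := by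
        rw [add_sub_cancel_right]; exact Real.hasDerivAt_log hx.ne'
      simpa [one_div, Function.comp_def] using hl.comp (x+1) this
    have h2 : HasDerivAt (fun t : ℝ => Real.log (Real.Gamma (t - 1))) (digamma x) (x + 1) := by
      have hb : HasDerivAt (fun t : ℝ => t - 1) 1 (x + 1) := (hasDerivAt_id _).sub_const 1
      have hl : HasDerivAt (fun t => Real.log (Real.Gamma t))
          (deriv (fun t => Real.log (Real.Gamma t)) x) (x + 1 - 1) := by
        rw [add_sub_cancel_right]; exact hΓd x hx
      simpa [digamma, Function.comp_def] using hl.comp (x+1) hb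
    exact h1.add h2
  have : deriv (fun t => Real.log (Real.Gamma t)) (x+1) = 1/x + digamma x := by
    rw [Filter.EventuallyEq.deriv_eq heq]
    exact hder.deriv
  simpa [digamma, add_comm] using this

lemma digamma_nat (k : ℕ) :
    digamma ((k:ℝ) + 1) = digamma 1 + ∑ i ∈ Finset.range k, 1 / ((i:ℝ) + 1) := by
  induction k with
  | zero => simp
  | succ n ih =>
      have h : ((n:ℝ) + 1) > 0 := by positivity
      rw [Finset.sum_range_succ, show ((n+1:ℕ):ℝ) + 1 = ((n:ℝ)+1) + 1 by push_cast; ring,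
        digamma_add_one h, ih]
      ring

lemma key_integral {Ω : Type*} [MeasureSpace Ω] [IsProbabilityMeasure (ℙ : Measure Ω)]
    (γ : ℝ) (hγ : 0 < γ) (k : ℕ)
    (F0 f0 : ℝ → ℝ) (hf0 : ∀ x, HasDerivAt F0 (f0 x) x) (hf0pos : ∀ x, 0 ≤ f0 x)
    (hF0bot : Tendsto F0 atBot (nhds 0)) (hF0top : Tendsto F0 atTop (nhds 1))
    (Y : Ω → ℝ) (hY : Measurable Y) (m n : ℕ) (hm : 1 ≤ m)
    (hdens : Measure.map Y ℙ = volume.withDensity (fun y => ENNReal.ofReal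
      ((k : ℝ) * (1 / γ) * (f0 y / (1 - F0 y)) *
        ((1 - F0 y) ^ (1 / γ)) ^ m * (1 - (1 - F0 y) ^ (1 / γ)) ^ n)))
    (Φ : ℝ → ℝ) (L0 : ℝ)
    (hΦd : ∀ t : ℝ, 0 < t →
      HasDerivAt Φ (-(γ * k) * Real.log t * t ^ (m - 1) * (1 - t) ^ n) t)
    (hΦ0 : Tendsto Φ (nhdsWithin 0 (Ioi 0)) (nhds L0)) (hΦv0 : Φ 0 = L0) :
    (∫ ω, Real.log (1 - F0 (Y ω)) ∂ℙ) = L0 - Φ 1 := by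
  -- basic facts
  set S : ℝ → ℝ := fun y => 1 - F0 y with hS_def
  set d : ℝ → ℝ := fun y => (k : ℝ) * (1 / γ) * (f0 y / S y) *
      ((S y) ^ (1 / γ)) ^ m * (1 - (S y) ^ (1 / γ)) ^ n with hd_def
  set ρ : ℝ → ℝ := fun y => Real.log (S y) * d y with hρ_def
  have hF0cont : Continuous F0 := by
    rw [continuous_iff_continuousAt]; exact fun x => (hf0 x).continuousAt
  have hf0eq : f0 = deriv F0 := funext fun x => ((hf0 x).deriv).symm
  have hf0meas : Measurable f0 := hf0eq ▸ measurable_deriv F0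
  have hmono : Monotone F0 := by
    apply monotone_of_deriv_nonneg (fun x => (hf0 x).differentiableAt)
    intro x; rw [(hf0 x).deriv]; exact hf0pos x
  have hle1 : ∀ y, F0 y ≤ 1 :=
    fun y => ge_of_tendsto hF0top (Filter.eventually_atTop.2 ⟨y, fun x hx => hmono hx⟩)
  have h0le : ∀ y, 0 ≤ F0 y :=
    fun y => le_of_tendsto hF0bot (Filter.eventually_atBot.2 ⟨y, fun x hx => hmono hx⟩)
  have hSnn : ∀ y, 0 ≤ S y := fun y => by simp [hS_def]; linarith [hle1 y]
  have hSle1 : ∀ y, S y ≤ 1 := fun y => by simp [hS_def]; linarith [h0le y]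
  have hUnn : ∀ y, 0 ≤ (S y) ^ (1/γ) := fun y => Real.rpow_nonneg (hSnn y) _
  have hUle1 : ∀ y, (S y) ^ (1/γ) ≤ 1 :=
    fun y => Real.rpow_le_one (hSnn y) (hSle1 y) (by positivity)
  have hd_nonneg : ∀ y, 0 ≤ d y := by
    intro y
    have h1 : 0 ≤ f0 y / S y := div_nonneg (hf0pos y) (hSnn y)
    have h2 : (0:ℝ) ≤ 1 - (S y) ^ (1/γ) := by linarith [hUle1 y]
    exact mul_nonneg (mul_nonneg (mul_nonneg (mul_nonneg (Nat.cast_nonneg k) (by positivity))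
      h1) (pow_nonneg (hUnn y) m)) (pow_nonneg h2 n)
  have hρ_nonpos : ∀ y, ρ y ≤ 0 := by
    intro y
    exact mul_nonpos_of_nonpos_of_nonneg (Real.log_nonpos (hSnn y) (hSle1 y)) (hd_nonneg y)
  -- step 1 : to a Lebesgue integral
  have hScont : Continuous S := continuous_const.sub hF0cont
  have hUcont : Continuous (fun y => (S y) ^ (1/γ)) :=
    (Real.continuous_rpow_const (by positivity)).comp hScont
  have hd_meas : Measurable d := by
    exact (((measurable_const.mul
      (hf0meas.div hScont.measurable)).mul
      ((hUcont.measurable).pow_const m)).mul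
      (((continuous_const.sub hUcont).measurable).pow_const n))
  have step1 : (∫ ω, Real.log (1 - F0 (Y ω)) ∂ℙ) = ∫ y, ρ y := by
    have hsm : AEStronglyMeasurable (fun x => Real.log (1 - F0 x)) (Measure.map Y ℙ) :=
      (Real.measurable_log.comp (measurable_const.sub hF0cont.measurable)).aestronglyMeasurable
    rw [← integral_map hY.aemeasurable hsm, hdens]
    have : (fun y => ENNReal.ofReal ((k : ℝ) * (1 / γ) * (f0 y / (1 - F0 y)) *
        ((1 - F0 y) ^ (1 / γ)) ^ m * (1 - (1 - F0 y) ^ (1 / γ)) ^ n))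
        = fun y => ((d y).toNNReal : ENNReal) := by
      funext y; rfl
    rw [this, integral_withDensity_eq_integral_smul (hd_meas.real_toNNReal)]
    congr 1; funext y
    rw [NNReal.smul_def, Real.coe_toNNReal _ (hd_nonneg y), smul_eq_mul, hρ_def, mul_comm]
  rw [step1]
  -- the antiderivative
  set U : ℝ → ℝ := fun y => (S y) ^ (1/γ) with hU_def
  set G : ℝ → ℝ := fun y => Φ (U y) with hG_def
  have hG : ∀ y, 0 < S y → HasDerivAt G (ρ y) y := by
    intro y hS
    have hSd : HasDerivAt S (0 - f0 y) y := (hasDerivAt_const y 1).sub (hf0 y)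
    have hU : HasDerivAt U ((0 - f0 y) * (1/γ) * S y ^ (1/γ - 1)) y :=
      hSd.rpow_const (Or.inl hS.ne')
    have hUp : 0 < U y := Real.rpow_pos_of_pos hS _
    have hcomp := (hΦd (U y) hUp).comp y hU
    convert hcomp using 1
    show Real.log (S y) * d y = _
    simp only [hd_def, hU_def, Function.comp]
    rw [Real.log_rpow hS,
      ← Real.rpow_natCast (S y ^ (1/γ)) (m-1), ← Real.rpow_mul (le_of_lt hS),
      ← Real.rpow_natCast (S y ^ (1/γ)) m, ← Real.rpow_mul (le_of_lt hS),
      Nat.cast_sub hm, Nat.cast_one]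
    rw [show (1/γ) * ((m:ℝ) - 1) = ((1/γ)*(m:ℝ) - 1) - (1/γ - 1) by ring,
      Real.rpow_sub hS ((1/γ)*(m:ℝ) - 1) (1/γ - 1),
      show (1/γ)*(m:ℝ) = ((1/γ)*(m:ℝ) - 1) + 1 by ring,
      Real.rpow_add hS, Real.rpow_one]
    field_simp
    ring
    rfl
    rfl
    rfl
  -- limits at -∞
  have hSbot : Tendsto S atBot (nhds 1) := by
    simpa using (tendsto_const_nhds (x := (1:ℝ)) (f := atBot)).sub hF0bot
  have hStop : Tendsto S atTop (nhds 0) := by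
    simpa using (tendsto_const_nhds (x := (1:ℝ)) (f := atTop)).sub hF0top
  have hUbot : Tendsto U atBot (nhds 1) := by
    have h1 : Tendsto (fun x : ℝ => x ^ (1/γ)) (nhds 1) (nhds 1) := by
      simpa [Real.one_rpow] using
        (Real.continuous_rpow_const (le_of_lt (by positivity : (0:ℝ) < 1/γ))).tendsto 1
    exact h1.comp hSbot
  have hGbot : Tendsto G atBot (nhds (Φ 1)) :=
    ((hΦd 1 one_pos).continuousAt.tendsto).comp hUbot
  -- the Iic part, given positivity of S up to a
  have iic_part : ∀ a : ℝ, (∀ y, y ≤ a → 0 < S y) →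
      IntegrableOn ρ (Iic a) ∧ (∫ x in Iic a, ρ x) = G a - Φ 1 := by
    intro a ha
    have hd' : ∀ x ∈ Ici (-a), HasDerivAt (fun x => G (-x)) (-ρ (-x)) x := by
      intro x hx
      have h1 : HasDerivAt (fun x : ℝ => -x) (-1) x := hasDerivAt_neg x
      have h2 := (hG (-x) (ha (-x) (by simpa [neg_le] using hx))).comp x h1
      simpa [mul_comm, Function.comp_def] using h2
    have htend : Tendsto (fun x => G (-x)) atTop (nhds (Φ 1)) :=
      hGbot.comp tendsto_neg_atTop_atBot
    have hint' : IntegrableOn (fun x => -ρ (-x)) (Ioi (-a)) :=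
      integrableOn_Ioi_deriv_of_nonneg' hd' (fun x _ => neg_nonneg.2 (hρ_nonpos _)) htend
    have hint'' : IntegrableOn (fun x => ρ (-x)) (Ici (-a)) := by
      rw [integrableOn_Ici_iff_integrableOn_Ioi]
      have h3 : (fun x => ρ (-x)) = fun x => -(-ρ (-x)) := by funext x; ring
      rw [h3]
      exact hint'.neg
    have hpre : (fun x : ℝ => -x) ⁻¹' (Iic a) = Ici (-a) := by
      ext x; simp [neg_le]
    have hint : IntegrableOn ρ (Iic a) := by
      refine (MeasurePreserving.integrableOn_comp_preimage
        (Measure.measurePreserving_neg (volume : Measure ℝ))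
        (Homeomorph.neg ℝ).measurableEmbedding).1 ?_
      show IntegrableOn (ρ ∘ fun x : ℝ => -x) ((fun x : ℝ => -x) ⁻¹' (Iic a)) volume
      rw [hpre]
      exact hint''
    refine ⟨hint, ?_⟩
    exact integral_Iic_of_hasDerivAt_of_tendsto'
      (fun x hx => hG x (ha x hx)) hint hGbot
  by_cases hone : ∀ y, F0 y < 1
  · -- S is everywhere positive
    have hSpos : ∀ y, 0 < S y := fun y => by
      have := hone y; simp only [hS_def]; linarith
    have hUtop : Tendsto U atTop (nhdsWithin 0 (Ioi 0)) := by
      apply tendsto_nhdsWithin_of_tendsto_nhds_of_eventually_within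
      · have h0 : ((0:ℝ) ^ (1/γ)) = 0 := Real.zero_rpow (by positivity)
        have h1 := (Real.continuous_rpow_const
          (le_of_lt (by positivity : (0:ℝ) < 1/γ))).tendsto 0
        rw [h0] at h1
        exact h1.comp hStop
      · exact Filter.Eventually.of_forall fun y => Real.rpow_pos_of_pos (hSpos y) _
    have hGtop : Tendsto G atTop (nhds L0) := hΦ0.comp hUtop
    have hderivIci : ∀ x ∈ Ici (0:ℝ), HasDerivAt G (ρ x) x := fun x _ => hG x (hSpos x)
    have hintIoi : IntegrableOn ρ (Ioi 0) :=
      integrableOn_Ioi_deriv_of_nonpos' hderivIci (fun x _ => hρ_nonpos x) hGtop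
    have hvalIoi : (∫ x in Ioi (0:ℝ), ρ x) = L0 - G 0 :=
      integral_Ioi_of_hasDerivAt_of_tendsto' hderivIci hintIoi hGtop
    obtain ⟨hintIic, hvalIic⟩ := iic_part 0 (fun y _ => hSpos y)
    rw [← setIntegral_univ, ← Set.Iic_union_Ioi (a := (0:ℝ)),
      setIntegral_union (Set.Iic_disjoint_Ioi le_rfl) measurableSet_Ioi hintIic hintIoi,
      hvalIic, hvalIoi]
    ring
  · -- S vanishes from some point on
    push_neg at hone
    obtain ⟨y1, hy1⟩ := hone
    have hy1' : F0 y1 = 1 := le_antisymm (hle1 y1) hy1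
    set E : Set ℝ := {y | F0 y = 1} with hE_def
    have hEne : E.Nonempty := ⟨y1, hy1'⟩
    have hEbdd : BddBelow E := by
      obtain ⟨y0, hy0⟩ : ∃ y0, F0 y0 < 1 := by
        have := hF0bot.eventually_lt_const (v := (0:ℝ)) one_pos
        exact (this.exists)
      refine ⟨y0, fun e he => ?_⟩
      by_contra hc
      push_neg at hc
      have h4 : F0 e ≤ F0 y0 := hmono hc.le
      have he' : F0 e = 1 := he
      rw [he'] at h4
      linarith
    set b : ℝ := sInf E with hb_def
    have hbE : F0 b = 1 := by
      have : b ∈ E := IsClosed.csInf_mem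
        (isClosed_eq hF0cont continuous_const) hEne hEbdd
      exact this
    have hlt : ∀ y, y < b → F0 y < 1 := by
      intro y hy
      rcases lt_or_eq_of_le (hle1 y) with h | h
      · exact h
      · exact absurd (csInf_le hEbdd (by exact h : y ∈ E)) (not_le.2 hy)
    have hSposlt : ∀ y, y < b → 0 < S y := fun y hy => by
      have := hlt y hy; simp only [hS_def]; linarith
    have hge : ∀ y, b ≤ y → F0 y = 1 := fun y hy =>
      le_antisymm (hle1 y) (hbE ▸ hmono hy)
    have hρ0 : ∀ y, b ≤ y → ρ y = 0 := by
      intro y hy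
      have : S y = 0 := by simp [hS_def, hge y hy]
      simp [hρ_def, this, Real.log_zero]
    have hind : ρ = (Iio b).indicator ρ := by
      funext y
      by_cases hy : y < b
      · simp [Set.indicator_of_mem, Set.mem_Iio, hy]
      · rw [Set.indicator_of_notMem (by simpa using hy)]
        exact hρ0 y (not_lt.1 hy)
    have hstep : (∫ y, ρ y) = ∫ y in Iio b, ρ y := by
      conv_lhs => rw [hind]
      exact integral_indicator measurableSet_Iio
    rw [hstep]
    obtain ⟨hintIic, hvalIic⟩ := iic_part (b-1) (fun y hy => hSposlt y (by linarith))
    -- continuity of G on [b-1, b]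
    have hUb : U b = 0 := by
      have : S b = 0 := by simp [hS_def, hbE]
      simp [hU_def, this]
      exact Real.zero_rpow (by positivity)
    have hΦw : ContinuousWithinAt Φ (Ici (0:ℝ)) 0 := by
      have hIci : (Ici (0:ℝ)) = {0} ∪ Ioi 0 := by
        ext x; simp [le_iff_lt_or_eq, eq_comm, or_comm]
      show Tendsto Φ (nhdsWithin 0 (Ici 0)) (nhds (Φ 0))
      rw [hIci, nhdsWithin_union, nhdsWithin_singleton, hΦv0]
      exact Filter.Tendsto.sup (by simpa [hΦv0] using tendsto_pure_nhds Φ 0) hΦ0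
    have hcontG : ContinuousOn G (Icc (b-1) b) := by
      intro x hx
      rcases lt_or_eq_of_le hx.2 with h | h
      · exact (hG x (hSposlt x h)).continuousAt.continuousWithinAt
      · rw [h]
        have hc : ContinuousWithinAt Φ (Ici (0:ℝ)) (U b) := by rw [hUb]; exact hΦw
        exact hc.comp hUcont.continuousWithinAt (fun y _ => hUnn y)
    have hintIoo : IntervalIntegrable ρ volume (b-1) b := by
      have hle : b - 1 ≤ b := by linarith
      have h1 := intervalIntegral.intervalIntegrable_deriv_of_nonneg
        (g := fun y => -G y) (g' := fun y => -ρ y)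
        (by rw [uIcc_of_le hle]; exact hcontG.neg)
        (by
          rw [min_eq_left hle, max_eq_right hle]
          intro x hx
          exact (hG x (hSposlt x hx.2)).neg)
        (by
          rw [min_eq_left hle, max_eq_right hle]
          intro x hx
          exact neg_nonneg.2 (hρ_nonpos x))
      have h2 := h1.neg
      have h3 : (-fun y => -ρ y) = ρ := by funext y; simp
      rwa [h3] at h2
    have hvalIvl : (∫ x in (b-1)..b, ρ x) = G b - G (b-1) := by
      apply intervalIntegral.integral_eq_sub_of_hasDeriv_right_of_le (by linarith) hcontG
        (fun x hx => (hG x (hSposlt x hx.2)).hasDerivWithinAt) hintIoo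
    have hGb : G b = L0 := by rw [hG_def]; simp only []; rw [hUb, hΦv0]
    have hintIoo' : IntegrableOn ρ (Ioo (b-1) b) :=
      ((intervalIntegrable_iff_integrableOn_Ioc_of_le (by linarith)).1 hintIoo).mono_set
        Ioo_subset_Ioc_self
    have hsplit : Iic (b-1) ∪ Ioo (b-1) b = Iio b := by
      ext x
      simp only [Set.mem_union, Set.mem_Iic, Set.mem_Ioo, Set.mem_Iio]
      constructor
      · rintro (h | ⟨h1, h2⟩) <;> linarith
      · intro h
        rcases le_or_gt x (b-1) with h1 | h1
        · exact Or.inl h1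
        · exact Or.inr ⟨h1, h⟩
    have hdisj : Disjoint (Iic (b-1)) (Ioo (b-1) b) := by
      rw [Set.disjoint_left]
      intro x hx hx2
      exact absurd hx2.1 (not_lt.2 hx)
    rw [← hsplit, setIntegral_union hdisj measurableSet_Ioo hintIic hintIoo', hvalIic]
    have : (∫ x in Ioo (b-1) b, ρ x) = L0 - G (b-1) := by
      rw [← integral_Ioc_eq_integral_Ioo, ← intervalIntegral.integral_of_le (by linarith),
        hvalIvl, hGb]
    rw [this]
    ring

/-- Let `Y` be an RNS complete-data observation from the PHR model with set
size `k` and indicator `z`, with density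
`g(y) = k (1/γ) f0(y)/(1-F0 y) ((1-F0 y)^(1/γ))^(α-1) (1-(1-F0 y)^(1/γ))^β`,
where `α = (1-z)(k-1)+2`, `β = z(k-1)`.  Then
`E[log (1 - F0 Y)] = γ k B(α-1, β+1) (ψ(α-1) - ψ(α+β))`. -/
theorem phr_rns_expectation_log_survival
    {Ω : Type*} [MeasureSpace Ω] [IsProbabilityMeasure (ℙ : Measure Ω)]
    (γ : ℝ) (hγ : 0 < γ) (k : ℕ) (hk : 1 ≤ k) (z : ℝ) (hz : z = 0 ∨ z = 1)
    (α β : ℝ) (hα : α = (1 - z) * (k - 1) + 2) (hβ : β = z * (k - 1))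
    (F0 f0 : ℝ → ℝ) (hf0 : ∀ x, HasDerivAt F0 (f0 x) x) (hf0pos : ∀ x, 0 ≤ f0 x)
    (hF0bot : Filter.Tendsto F0 Filter.atBot (nhds 0))
    (hF0top : Filter.Tendsto F0 Filter.atTop (nhds 1))
    (Y : Ω → ℝ) (hY : Measurable Y)
    (hdens : Measure.map Y ℙ = volume.withDensity (fun y => ENNReal.ofReal
      ((k : ℝ) * (1 / γ) * (f0 y / (1 - F0 y)) *
        ((1 - F0 y) ^ (1 / γ)) ^ (α - 1) * (1 - (1 - F0 y) ^ (1 / γ)) ^ β))) :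
    (∫ ω, Real.log (1 - F0 (Y ω)) ∂ℙ) =
      γ * (k : ℝ) * betaFn (α - 1) (β + 1) * (digamma (α - 1) - digamma (α + β)) := by
  have hk0 : (0:ℝ) < k := by exact_mod_cast hk
  have hkk : (k:ℝ) ≠ 0 := ne_of_gt hk0
  have hΓk : Real.Gamma (k:ℝ) ≠ 0 := (Real.Gamma_pos_of_pos hk0).ne'
  rcases hz with hz | hz
  · -- z = 0 : m = k, n = 0
    subst hz
    have hα1 : α - 1 = ((k:ℕ):ℝ) := by rw [hα]; push_cast; ring
    have hβ0 : β = ((0:ℕ):ℝ) := by rw [hβ]; norm_num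
    have hdens' : Measure.map Y ℙ = volume.withDensity (fun y => ENNReal.ofReal
        ((k : ℝ) * (1 / γ) * (f0 y / (1 - F0 y)) *
          ((1 - F0 y) ^ (1 / γ)) ^ k * (1 - (1 - F0 y) ^ (1 / γ)) ^ (0:ℕ))) := by
      rw [hdens]
      congr 1
      funext y
      rw [hα1, hβ0, Real.rpow_natCast, Real.rpow_natCast]
    set Φ : ℝ → ℝ := fun t => γ / k * t^k - γ * (t^k * Real.log t) with hΦ_def
    have hΦd : ∀ t : ℝ, 0 < t →
        HasDerivAt Φ (-(γ * k) * Real.log t * t ^ (k - 1) * (1 - t) ^ (0:ℕ)) t := by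
      intro t ht
      have h1 : HasDerivAt (fun t : ℝ => t^k) ((k:ℝ) * t^(k-1)) t := by
        simpa using hasDerivAt_pow k t
      have h2 : HasDerivAt (fun t : ℝ => t^k * Real.log t)
          ((k:ℝ) * t^(k-1) * Real.log t + t^k * t⁻¹) t :=
        h1.mul (Real.hasDerivAt_log ht.ne')
      have h3 := (h1.const_mul (γ / k)).sub (h2.const_mul γ)
      convert h3 using 1
      · rfl
      · rfl
      · rfl
      have hpow : t ^ k = t^(k-1) * t := by
        conv_lhs => rw [← Nat.sub_add_cancel hk, pow_succ]
      rw [pow_zero, hpow]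
      field_simp
      ring
    have hΦ0 : Filter.Tendsto Φ (nhdsWithin 0 (Ioi 0)) (nhds 0) := by
      have h1 : Filter.Tendsto (fun t : ℝ => γ / k * t ^ k) (nhdsWithin 0 (Ioi 0)) (nhds 0) := by
        have := ((continuous_pow k).tendsto (0:ℝ)).const_mul (γ / (k:ℝ))
        rw [zero_pow (by omega : k ≠ 0), mul_zero] at this
        exact this.mono_left nhdsWithin_le_nhds
      have h2 : Filter.Tendsto (fun t : ℝ => γ * (t ^ k * Real.log t))
          (nhdsWithin 0 (Ioi 0)) (nhds 0) := by
        have hb := tendsto_log_mul_rpow_nhdsGT_zero (by positivity : (0:ℝ) < (k:ℝ))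
        have hb' : Filter.Tendsto (fun t : ℝ => t ^ k * Real.log t)
            (nhdsWithin 0 (Ioi 0)) (nhds 0) := by
          apply hb.congr
          intro x
          rw [Real.rpow_natCast]
          ring
        simpa using hb'.const_mul γ
      simpa using h1.sub h2
    have hΦv0 : Φ 0 = 0 := by
      simp [hΦ_def, zero_pow (by omega : k ≠ 0)]
    have hkey := key_integral γ hγ k F0 f0 hf0 hf0pos hF0bot hF0top Y hY k 0 hk hdens'
      Φ 0 hΦd hΦ0 hΦv0
    rw [hkey]
    have hΦ1 : Φ 1 = γ / k := by simp [hΦ_def]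
    rw [hΦ1, hα1]
    have hβ1 : β + 1 = 1 := by rw [hβ0]; norm_num
    have hαβ : α + β = (k:ℝ) + 1 := by rw [hα, hβ]; push_cast; ring
    rw [hβ1, hαβ]
    have hbeta : betaFn ((k:ℕ):ℝ) 1 = 1 / k := by
      rw [betaFn, Real.Gamma_one, Real.Gamma_add_one hkk]
      field_simp
    have hdg : digamma ((k:ℝ) + 1) = digamma (k:ℝ) + 1 / (k:ℝ) := digamma_add_one hk0
    push_cast
    rw [hbeta, hdg]
    field_simp
    ring
  · -- z = 1 : m = 1, n = k - 1
    subst hz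
    have hα1 : α - 1 = ((1:ℕ):ℝ) := by rw [hα]; push_cast; ring
    have hβn : β = ((k-1:ℕ):ℝ) := by rw [hβ, Nat.cast_sub hk]; push_cast; ring
    have hdens' : Measure.map Y ℙ = volume.withDensity (fun y => ENNReal.ofReal
        ((k : ℝ) * (1 / γ) * (f0 y / (1 - F0 y)) *
          ((1 - F0 y) ^ (1 / γ)) ^ (1:ℕ) * (1 - (1 - F0 y) ^ (1 / γ)) ^ (k-1:ℕ))) := by
      rw [hdens]
      congr 1
      funext y
      rw [hα1, hβn, Real.rpow_natCast, Real.rpow_natCast]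
    set Φ : ℝ → ℝ := fun t => -γ * (-(Real.log t) * ((1-t)^k - 1) +
        ∑ j ∈ Finset.range k, (1-t)^(j+1)/((j:ℝ)+1)) with hΦ_def
    set L0 : ℝ := -γ * ∑ j ∈ Finset.range k, 1/((j:ℝ)+1) with hL0_def
    have hΦd : ∀ t : ℝ, 0 < t →
        HasDerivAt Φ (-(γ * k) * Real.log t * t ^ (1 - 1 : ℕ) * (1 - t) ^ (k-1:ℕ)) t := by
      intro t ht
      have hlog : HasDerivAt (fun t : ℝ => -(Real.log t)) (-t⁻¹) t :=
        (Real.hasDerivAt_log ht.ne').neg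
      have hq : HasDerivAt (fun t : ℝ => (1-t)^k - 1)
          (((k:ℝ) * (1-t)^(k-1) * (-1))) t := by
        exact ((((hasDerivAt_id t).const_sub 1).pow k).sub_const 1)
      have h1 := hlog.mul hq
      have hsum : HasDerivAt (fun t : ℝ => ∑ j ∈ Finset.range k, (1-t)^(j+1)/((j:ℝ)+1))
          (∑ j ∈ Finset.range k, ((((j:ℝ)+1) * (1-t)^j * (-1)) / ((j:ℝ)+1))) t := by
        apply HasDerivAt.fun_sum
        intro j _
        have := (((hasDerivAt_id t).const_sub 1).pow (j+1)).div_const ((j:ℝ)+1)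
        simpa using this
      have h3 := (h1.add hsum).const_mul (-γ)
      convert h3 using 1
      · rfl
      · rfl
      · rfl
      have hsum2 : (∑ j ∈ Finset.range k, ((((j:ℝ)+1) * (1-t)^j * (-1)) / ((j:ℝ)+1)))
          = -∑ j ∈ Finset.range k, (1-t)^j := by
        rw [← Finset.sum_neg_distrib]
        apply Finset.sum_congr rfl
        intro j _
        have : ((j:ℝ)+1) ≠ 0 := by positivity
        field_simp
      rw [hsum2, pow_zero]
      have hgeom := geom_sum_mul (1-t) k
      have ht' : t ≠ 0 := ht.ne'
      field_simp
      linear_combination hgeom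
    have hΦ0 : Filter.Tendsto Φ (nhdsWithin 0 (Ioi 0)) (nhds L0) := by
      have hid : ∀ t : ℝ, -(Real.log t) * ((1-t)^k - 1)
          = (Real.log t * t) * ∑ j ∈ Finset.range k, (1-t)^j := by
        intro t
        have hgeom := geom_sum_mul (1-t) k
        linear_combination (Real.log t) * hgeom
      have hterm1 : Filter.Tendsto (fun t : ℝ => -(Real.log t) * ((1-t)^k - 1))
          (nhdsWithin 0 (Ioi 0)) (nhds 0) := by
        have hlt : Filter.Tendsto (fun t : ℝ => Real.log t * t)
            (nhdsWithin 0 (Ioi 0)) (nhds 0) := by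
          have := tendsto_log_mul_rpow_nhdsGT_zero one_pos
          apply this.congr
          intro x
          rw [Real.rpow_one]
        have hps : Filter.Tendsto (fun t : ℝ => ∑ j ∈ Finset.range k, (1-t)^j)
            (nhdsWithin 0 (Ioi 0)) (nhds (k:ℝ)) := by
          have hc : Continuous (fun t : ℝ => ∑ j ∈ Finset.range k, (1-t)^j) := by
            continuity
          have := hc.tendsto 0
          simp only [sub_zero, one_pow, Finset.sum_const, Finset.card_range,
            nsmul_eq_mul, mul_one] at this
          exact this.mono_left nhdsWithin_le_nhds
        have := hlt.mul hps
        rw [zero_mul] at this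
        exact Filter.Tendsto.congr (fun x => (hid x).symm) this
      have hterm2 : Filter.Tendsto (fun t : ℝ => ∑ j ∈ Finset.range k, (1-t)^(j+1)/((j:ℝ)+1))
          (nhdsWithin 0 (Ioi 0)) (nhds (∑ j ∈ Finset.range k, 1/((j:ℝ)+1))) := by
        have hc : Continuous (fun t : ℝ => ∑ j ∈ Finset.range k, (1-t)^(j+1)/((j:ℝ)+1)) := by
          apply continuous_finset_sum
          intro j _
          exact (Continuous.pow (by continuity) (j+1)).div_const _
        have := hc.tendsto 0
        simp only [sub_zero, one_pow] at this
        exact this.mono_left nhdsWithin_le_nhds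
      have := (hterm1.add hterm2).const_mul (-γ)
      rw [zero_add] at this
      exact this
    have hΦv0 : Φ 0 = L0 := by
      simp [hΦ_def, hL0_def]
    have hkey := key_integral γ hγ k F0 f0 hf0 hf0pos hF0bot hF0top Y hY 1 (k-1) le_rfl hdens'
      Φ L0 hΦd hΦ0 hΦv0
    rw [hkey]
    have hΦ1 : Φ 1 = 0 := by
      simp [hΦ_def, Real.log_one]
    rw [hΦ1, hα1]
    have hβ1 : β + 1 = (k:ℝ) := by rw [hβ]; push_cast; ring
    have hαβ : α + β = (k:ℝ) + 1 := by rw [hα, hβ]; push_cast; ring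
    rw [hβ1, hαβ]
    have hbeta : betaFn (1:ℝ) (k:ℝ) = 1 / k := by
      rw [betaFn, Real.Gamma_one, add_comm, Real.Gamma_add_one hkk]
      field_simp
    have hdg := digamma_nat k
    push_cast
    rw [hbeta, hdg, hL0_def]
    field_simp
    ring
end

section
/- If Y is the minimum of k i.i.d. Exponential(λ) random variables with probability 1−ζ and the maximum with probability ζ (independent Bernoulli choice), then E[Y] = λ·(ζ·Σ_{j=1}^{k} 1/j + (1−ζ)/k); consequently the Type I incomplete-data MM estimator γ̂ = (1/m)Σ Yi/Ri with Ri = ζ·Σ_{j=1}^{ki} 1/j + (1−ζ)/ki is unbiased for λ. -/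
open MeasureTheory ProbabilityTheory Real

/-- `X` is exponentially distributed with *mean* `l` (CDF `1 - exp (-x/l)` for `x ≥ 0`). -/
def IsExponentialMean {Ω : Type*} [MeasureSpace Ω] (X : Ω → ℝ) (l : ℝ) : Prop :=
  ∀ x : ℝ, (ℙ {ω | X ω ≤ x}).toReal = if 0 ≤ x then 1 - Real.exp (-x / l) else 0

section Aux

open Set Filter Topology

lemma RNSaux.gInt (l : ℝ) (hl : 0 < l) (n : ℕ) :
    IntegrableOn (fun t => (1 - exp (-t/l))^n * exp (-t/l)) (Ioi 0) := by
  have hbase : IntegrableOn (fun t : ℝ => exp (-(1/l) * t)) (Ioi 0) :=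
    exp_neg_integrableOn_Ioi 0 (by positivity)
  refine Integrable.mono hbase ?_ ?_
  · exact (((continuous_const.sub ((continuous_id.neg.div_const l).rexp)).pow n).mul
      ((continuous_id.neg.div_const l).rexp)).aestronglyMeasurable
  · filter_upwards [ae_restrict_mem measurableSet_Ioi] with t (ht : 0 < t)
    have h1 : (0:ℝ) < exp (-t/l) := exp_pos _
    have h2 : exp (-t/l) ≤ 1 := exp_le_one_iff.mpr (by
      apply div_nonpos_of_nonpos_of_nonneg <;> linarith)
    have h3 : (0:ℝ) ≤ 1 - exp (-t/l) := by linarith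
    have h4 : (1 - exp (-t/l))^n ≤ 1 := pow_le_one₀ h3 (by linarith)
    rw [Real.norm_eq_abs, Real.norm_eq_abs, abs_of_nonneg (by positivity),
      abs_of_pos (exp_pos _), neg_mul, one_div, ← div_eq_inv_mul, neg_div]
    rw [neg_div] at h1 h4
    exact mul_le_of_le_one_left h1.le h4

lemma RNSaux.gVal (l : ℝ) (hl : 0 < l) (n : ℕ) :
    ∫ t in Ioi 0, (1 - exp (-t/l))^n * exp (-t/l) = l / (n+1) := by
  have hd : ∀ t ∈ Ici (0:ℝ), HasDerivAt (fun t => l / (n+1) * (1 - exp (-t/l))^(n+1))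
      ((1 - exp (-t/l))^n * exp (-t/l)) t := by
    intro t _
    have h1 : HasDerivAt (fun t : ℝ => -t/l) (-1/l) t := by
      simpa using ((hasDerivAt_id t).neg.div_const l)
    have h2 : HasDerivAt (fun t : ℝ => 1 - exp (-t/l)) (exp (-t/l) / l) t := by
      have := (h1.exp).const_sub 1
      refine this.congr_deriv ?_
      field_simp
    have h3 := (h2.pow (n+1)).const_mul (l / (n+1))
    refine h3.congr_deriv ?_
    push_cast [Nat.add_sub_cancel]
    field_simp
  have htend : Tendsto (fun t => l / (n+1) * (1 - exp (-t/l))^(n+1)) atTop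
      (𝓝 (l / (n+1))) := by
    have h0 : Tendsto (fun t : ℝ => -t/l) atTop atBot := by
      apply Tendsto.atBot_div_const hl
      exact tendsto_neg_atBot_iff.mpr tendsto_id
    have h1 : Tendsto (fun t : ℝ => exp (-t/l)) atTop (𝓝 0) :=
      Real.tendsto_exp_atBot.comp h0
    have := (((h1.const_sub 1).pow (n+1)).const_mul (l / (n+1)))
    simpa using this
  have := integral_Ioi_of_hasDerivAt_of_tendsto' hd (RNSaux.gInt l hl n) htend
  simpa using this

lemma RNSaux.fInt (l : ℝ) (hl : 0 < l) (k : ℕ) :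
    IntegrableOn (fun t => 1 - (1 - exp (-t/l))^k) (Ioi 0) := by
  induction k with
  | zero => simpa using integrableOn_zero
  | succ n ih =>
    have h2 : IntegrableOn (fun t => (1 - (1 - exp (-t/l))^n) + (1 - exp (-t/l))^n * exp (-t/l))
        (Ioi 0) := ih.add (RNSaux.gInt l hl n)
    refine h2.congr_fun (fun t _ => ?_) measurableSet_Ioi
    ring

lemma RNSaux.fVal (l : ℝ) (hl : 0 < l) (k : ℕ) :
    ∫ t in Ioi 0, (1 - (1 - exp (-t/l))^k) = l * ∑ j ∈ Finset.Icc 1 k, (1:ℝ)/j := by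
  induction k with
  | zero => simp
  | succ n ih =>
    have heq : ∀ t ∈ Ioi (0:ℝ), 1 - (1 - exp (-t/l))^(n+1)
        = (1 - (1 - exp (-t/l))^n) + (1 - exp (-t/l))^n * exp (-t/l) := fun t _ => by ring
    rw [setIntegral_congr_fun measurableSet_Ioi heq,
      integral_add (RNSaux.fInt l hl n) (RNSaux.gInt l hl n), ih, RNSaux.gVal l hl n,
      Finset.sum_Icc_succ_top (Nat.one_le_iff_ne_zero.mpr (Nat.succ_ne_zero n))]
    push_cast
    field_simp

lemma RNSaux.minVal (l : ℝ) (hl : 0 < l) (k : ℕ) (hk : 1 ≤ k) :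
    ∫ t in Ioi (0:ℝ), exp (-((k:ℝ)*t)/l) = l / k := by
  have hkl : (0:ℝ) < k / l := by
    have : (0:ℝ) < k := by exact_mod_cast hk
    positivity
  have hint' : IntegrableOn (fun t : ℝ => exp (-((k:ℝ)*t)/l)) (Ioi 0) := by
    refine (exp_neg_integrableOn_Ioi 0 hkl).congr_fun (fun t _ => by ring_nf) measurableSet_Ioi
  have hd : ∀ t ∈ Ici (0:ℝ), HasDerivAt (fun t : ℝ => -(l/k) * exp (-((k:ℝ)*t)/l))
      (exp (-((k:ℝ)*t)/l)) t := by
    intro t _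
    have hk0 : (0:ℝ) < k := by exact_mod_cast hk
    have h1 : HasDerivAt (fun t : ℝ => -((k:ℝ)*t)/l) (-(k:ℝ)/l) t := by
      simpa using (((hasDerivAt_id t).const_mul (k:ℝ)).neg.div_const l)
    have := (h1.exp).const_mul (-(l/k))
    refine this.congr_deriv ?_
    field_simp
  have htend : Tendsto (fun t : ℝ => -(l/k) * exp (-((k:ℝ)*t)/l)) atTop (𝓝 0) := by
    have h0 : Tendsto (fun t : ℝ => -((k:ℝ)*t)/l) atTop atBot := by
      apply Tendsto.atBot_div_const hl
      apply tendsto_neg_atBot_iff.mpr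
      have hk0 : (0:ℝ) < k := by exact_mod_cast hk
      exact (tendsto_id.const_mul_atTop hk0)
    have h1 := Real.tendsto_exp_atBot.comp h0
    have := h1.const_mul (-(l/k))
    simpa using this
  have := integral_Ioi_of_hasDerivAt_of_tendsto' hd hint' htend
  rw [this]
  simp

variable {Ω : Type*} [MeasureSpace Ω] [IsProbabilityMeasure (ℙ : Measure Ω)]

lemma RNSaux.exp_cdf {X : Ω → ℝ} {l : ℝ} (hX : IsExponentialMean X l) {x : ℝ} (hx : 0 ≤ x) :
    ℙ {ω | X ω ≤ x} = ENNReal.ofReal (1 - exp (-x/l)) := by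
  have h := hX x
  rw [if_pos hx] at h
  rw [← h, ENNReal.ofReal_toReal (measure_ne_top _ _)]

lemma RNSaux.exp_cdf_le_one {X : Ω → ℝ} {l : ℝ} (hX : IsExponentialMean X l) {x : ℝ}
    (hx : 0 ≤ x) : exp (-x/l) ≤ 1 := by
  have h := hX x
  rw [if_pos hx] at h
  have := ENNReal.toReal_nonneg (a := ℙ {ω | X ω ≤ x})
  linarith [h ▸ this]

lemma RNSaux.exp_ae_nonneg {X : Ω → ℝ} {l : ℝ} (hX : IsExponentialMean X l) : 0 ≤ᵐ[ℙ] X := by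
  have hnull : ∀ n : ℕ, ℙ {ω | X ω ≤ -(1/(n+1))} = 0 := by
    intro n
    have h := hX (-(1/(n+1)))
    have h0 : (0:ℝ) < 1/((n:ℝ)+1) := one_div_pos.mpr (by positivity)
    rw [if_neg (by push_neg; linarith)] at h
    exact (ENNReal.toReal_eq_zero_iff _).mp h |>.resolve_right (measure_ne_top _ _)
  have hsub : {ω | ¬ (0:ℝ) ≤ X ω} ⊆ ⋃ n : ℕ, {ω | X ω ≤ -(1/(n+1))} := by
    intro ω hω
    simp only [not_le, Set.mem_setOf_eq] at hω
    obtain ⟨n, hn⟩ := exists_nat_one_div_lt (neg_pos.mpr hω)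
    exact Set.mem_iUnion.mpr ⟨n, by simp only [Set.mem_setOf_eq]; linarith⟩
  rw [EventuallyLE, ae_iff]
  exact measure_mono_null hsub (measure_iUnion_null fun n => hnull n)

lemma RNSaux.exp_tail {X : Ω → ℝ} {l : ℝ} (hmeas : Measurable X) (hX : IsExponentialMean X l)
    {x : ℝ} (hx : 0 ≤ x) : ℙ {ω | x < X ω} = ENNReal.ofReal (exp (-x/l)) := by
  have hc : {ω | x < X ω} = {ω | X ω ≤ x}ᶜ := by ext ω; simp [not_le]
  have h1 : (0:ℝ) ≤ 1 - exp (-x/l) := by linarith [RNSaux.exp_cdf_le_one hX hx]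
  rw [hc, measure_compl (measurableSet_le hmeas measurable_const) (measure_ne_top _ _),
    measure_univ, RNSaux.exp_cdf hX hx, ← ENNReal.ofReal_one, ← ENNReal.ofReal_sub _ h1]
  norm_num

lemma RNSaux.max_exp (l : ℝ) (hl : 0 < l) (k : ℕ) (hk : 1 ≤ k) (X : Fin k → Ω → ℝ)
    (hmeas : ∀ j, Measurable (X j))
    (hindep : iIndepFun X ℙ)
    (hexp : ∀ j, IsExponentialMean (X j) l) :
    Integrable (fun ω => ⨆ j, X j ω) ℙ ∧
    ∫ ω, ⨆ j, X j ω = l * ∑ j ∈ Finset.Icc 1 k, (1:ℝ)/j := by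
  haveI : Nonempty (Fin k) := Fin.pos_iff_nonempty.mp hk
  have hMdef : (fun ω => ⨆ j, X j ω)
      = fun ω => Finset.univ.sup' Finset.univ_nonempty (fun j => X j ω) :=
    funext fun ω => (Finset.sup'_univ_eq_ciSup _).symm
  have hM : Measurable (fun ω => ⨆ j, X j ω) := by
    rw [hMdef]
    have : (fun ω => Finset.univ.sup' Finset.univ_nonempty (fun j => X j ω))
        = Finset.univ.sup' Finset.univ_nonempty X :=
      funext fun ω => (Finset.sup'_apply _ _ _).symm
    rw [this]
    exact Finset.measurable_sup' _ (fun j _ => hmeas j)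
  have hnn : 0 ≤ᵐ[ℙ] (fun ω => ⨆ j, X j ω) := by
    have hall : ∀ᵐ ω ∂ℙ, ∀ j, 0 ≤ X j ω :=
      ae_all_iff.mpr fun j => RNSaux.exp_ae_nonneg (hexp j)
    filter_upwards [hall] with ω hω
    have j0 : Fin k := Classical.arbitrary _
    calc (0:ℝ) ≤ X j0 ω := hω j0
    _ ≤ ⨆ j, X j ω := le_ciSup (f := fun j => X j ω)
        (Set.Finite.bddAbove (Set.finite_range _)) j0
  have htail : ∀ t : ℝ, 0 ≤ t →
      ℙ {ω | t < ⨆ j, X j ω} = ENNReal.ofReal (1 - (1 - exp (-t/l))^k) := by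
    intro t ht
    have he1 : exp (-t/l) ≤ 1 := RNSaux.exp_cdf_le_one (hexp (Classical.arbitrary _)) ht
    have he0 : (0:ℝ) < exp (-t/l) := exp_pos _
    have hp0 : (0:ℝ) ≤ (1 - exp (-t/l))^k := pow_nonneg (by linarith) _
    have hp1 : (1 - exp (-t/l))^k ≤ 1 := pow_le_one₀ (by linarith) (by linarith)
    have hsetc : {ω | t < ⨆ j, X j ω} = {ω | (⨆ j, X j ω) ≤ t}ᶜ := by
      ext ω; simp [not_le]
    have hset : {ω | (⨆ j, X j ω) ≤ t} = ⋂ j, {ω | X j ω ≤ t} := by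
      ext ω
      simp only [Set.mem_setOf_eq, Set.mem_iInter]
      exact ciSup_le_iff (Set.Finite.bddAbove (Set.finite_range fun j => X j ω))
    have hprod : ℙ {ω | (⨆ j, X j ω) ≤ t} = ENNReal.ofReal ((1 - exp (-t/l))^k) := by
      rw [hset, hindep.meas_iInter (s := fun j => {ω | X j ω ≤ t})
        (fun j => ⟨Set.Iic t, measurableSet_Iic, rfl⟩)]
      have : ∀ j : Fin k, ℙ {ω | X j ω ≤ t} = ENNReal.ofReal (1 - exp (-t/l)) :=
        fun j => RNSaux.exp_cdf (hexp j) ht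
      rw [Finset.prod_congr rfl (fun j _ => this j), Finset.prod_const,
        ← ENNReal.ofReal_pow (by linarith), Finset.card_univ, Fintype.card_fin]
    rw [hsetc, measure_compl (measurableSet_le hM measurable_const) (measure_ne_top _ _),
      measure_univ, hprod, ← ENNReal.ofReal_one, ← ENNReal.ofReal_sub _ hp0]
  have hlint : ∫⁻ ω, ENNReal.ofReal (⨆ j, X j ω) ∂ℙ
      = ENNReal.ofReal (l * ∑ j ∈ Finset.Icc 1 k, (1:ℝ)/j) := by
    rw [lintegral_eq_lintegral_meas_lt ℙ hnn hM.aemeasurable]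
    rw [setLIntegral_congr_fun measurableSet_Ioi
      (fun t (ht : 0 < t) => htail t ht.le)]
    rw [← ofReal_integral_eq_lintegral_ofReal (RNSaux.fInt l hl k) ?_, RNSaux.fVal l hl k]
    · filter_upwards [ae_restrict_mem measurableSet_Ioi] with t (ht : 0 < t)
      have he1 : exp (-t/l) ≤ 1 := RNSaux.exp_cdf_le_one (hexp (Classical.arbitrary _)) ht.le
      have he0 : (0:ℝ) < exp (-t/l) := exp_pos _
      have hp1 : (1 - exp (-t/l))^k ≤ 1 := pow_le_one₀ (by linarith) (by linarith)
      simp only [Pi.zero_apply]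
      linarith
  have hint : Integrable (fun ω => ⨆ j, X j ω) ℙ := by
    refine ⟨hM.aestronglyMeasurable, ?_⟩
    rw [hasFiniteIntegral_iff_ofReal hnn, hlint]
    exact ENNReal.ofReal_lt_top
  refine ⟨hint, ?_⟩
  rw [integral_eq_lintegral_of_nonneg_ae hnn hM.aestronglyMeasurable, hlint,
    ENNReal.toReal_ofReal]
  have hH : (0:ℝ) ≤ ∑ j ∈ Finset.Icc 1 k, (1:ℝ)/j :=
    Finset.sum_nonneg fun j _ => by positivity
  positivity

lemma RNSaux.min_exp (l : ℝ) (hl : 0 < l) (k : ℕ) (hk : 1 ≤ k) (X : Fin k → Ω → ℝ)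
    (hmeas : ∀ j, Measurable (X j))
    (hindep : iIndepFun X ℙ)
    (hexp : ∀ j, IsExponentialMean (X j) l) :
    Integrable (fun ω => ⨅ j, X j ω) ℙ ∧
    ∫ ω, ⨅ j, X j ω = l / k := by
  haveI : Nonempty (Fin k) := Fin.pos_iff_nonempty.mp hk
  have hNdef : (fun ω => ⨅ j, X j ω)
      = fun ω => Finset.univ.inf' Finset.univ_nonempty (fun j => X j ω) :=
    funext fun ω => (Finset.inf'_univ_eq_ciInf _).symm
  have hN : Measurable (fun ω => ⨅ j, X j ω) := by
    rw [hNdef]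
    have : (fun ω => Finset.univ.inf' Finset.univ_nonempty (fun j => X j ω))
        = Finset.univ.inf' Finset.univ_nonempty X :=
      funext fun ω => (Finset.inf'_apply _ _ _).symm
    rw [this]
    exact Finset.inf'_induction _ _ (fun _f hf _g hg => hf.inf hg) fun j _ => hmeas j
  have hnn : 0 ≤ᵐ[ℙ] (fun ω => ⨅ j, X j ω) := by
    have hall : ∀ᵐ ω ∂ℙ, ∀ j, 0 ≤ X j ω :=
      ae_all_iff.mpr fun j => RNSaux.exp_ae_nonneg (hexp j)
    filter_upwards [hall] with ω hω
    exact le_ciInf fun j => hω j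
  have htail : ∀ t : ℝ, 0 ≤ t →
      ℙ {ω | t < ⨅ j, X j ω} = ENNReal.ofReal (exp (-((k:ℝ)*t)/l)) := by
    intro t ht
    have hset : {ω | t < ⨅ j, X j ω} = ⋂ j, {ω | t < X j ω} := by
      ext ω
      simp only [Set.mem_setOf_eq, Set.mem_iInter, congrFun hNdef ω, Finset.lt_inf'_iff,
        Finset.mem_univ, forall_true_left]
    rw [hset, hindep.meas_iInter (s := fun j => {ω | t < X j ω})
      (fun j => ⟨Set.Ioi t, measurableSet_Ioi, rfl⟩)]
    have : ∀ j : Fin k, ℙ {ω | t < X j ω} = ENNReal.ofReal (exp (-t/l)) :=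
      fun j => RNSaux.exp_tail (hmeas j) (hexp j) ht
    rw [Finset.prod_congr rfl (fun j _ => this j), Finset.prod_const,
      ← ENNReal.ofReal_pow (exp_pos _).le, Finset.card_univ, Fintype.card_fin,
      ← Real.exp_nat_mul]
    congr 1
    ring
  have hIntOn : IntegrableOn (fun t : ℝ => exp (-((k:ℝ)*t)/l)) (Set.Ioi (0:ℝ)) := by
    have hkl : (0:ℝ) < k / l := by
      have : (0:ℝ) < k := by exact_mod_cast hk
      positivity
    refine (exp_neg_integrableOn_Ioi 0 hkl).congr_fun (fun t _ => by ring_nf) measurableSet_Ioi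
  have hlint : ∫⁻ ω, ENNReal.ofReal (⨅ j, X j ω) ∂ℙ = ENNReal.ofReal (l / k) := by
    rw [lintegral_eq_lintegral_meas_lt ℙ hnn hN.aemeasurable]
    rw [setLIntegral_congr_fun measurableSet_Ioi
      (fun t (ht : 0 < t) => htail t ht.le)]
    rw [← ofReal_integral_eq_lintegral_ofReal hIntOn
      (ae_of_all _ fun t => (exp_pos _).le), RNSaux.minVal l hl k hk]
  have hint : Integrable (fun ω => ⨅ j, X j ω) ℙ := by
    refine ⟨hN.aestronglyMeasurable, ?_⟩
    rw [hasFiniteIntegral_iff_ofReal hnn, hlint]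
    exact ENNReal.ofReal_lt_top
  refine ⟨hint, ?_⟩
  rw [integral_eq_lintegral_of_nonneg_ae hnn hN.aestronglyMeasurable, hlint,
    ENNReal.toReal_ofReal (by positivity)]

end Aux

/-- For the Type I RNS design from `Exponential(λ)`: if `Y i` is the maximum
of `k i` i.i.d. `Exp(λ)` variables with probability `ζ` and the minimum with probability
`1 - ζ` (independent Bernoulli choice), then `E[Y i] = λ (ζ Σ_{j=1}^{k i} 1/j + (1-ζ)/(k i))`;
consequently the Type I MM estimator `(1/m) Σ Y i / R i`, with
`R i = ζ Σ_{j=1}^{k i} 1/j + (1-ζ)/(k i)`, is unbiased for `λ`. -/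
theorem type1_mm_estimator_exponential
    {Ω : Type*} [MeasureSpace Ω] [IsProbabilityMeasure (ℙ : Measure Ω)]
    (m : ℕ) (hm : 1 ≤ m) (lam : ℝ) (hlam : 0 < lam)
    (ζ : ℝ) (hζ : ζ ∈ Set.Icc (0 : ℝ) 1)
    (k : Fin m → ℕ) (hk : ∀ i, 1 ≤ k i)
    (X : (i : Fin m) → Fin (k i) → Ω → ℝ)
    (hmeas : ∀ i j, Measurable (X i j))
    (hindep : ∀ i, iIndepFun (X i) ℙ)
    (hexp : ∀ i j, IsExponentialMean (X i j) lam)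
    (Z : Fin m → Ω → ℝ) (hZmeas : ∀ i, Measurable (Z i))
    (hZrange : ∀ i ω, Z i ω = 0 ∨ Z i ω = 1)
    (hZber : ∀ i, (ℙ {ω | Z i ω = 1}).toReal = ζ)
    (hZindep : ∀ i, IndepFun (Z i) (fun ω => (fun j => X i j ω)) ℙ)
    (Y : Fin m → Ω → ℝ)
    (hY : ∀ i ω, Y i ω = Z i ω * (⨆ j, X i j ω) + (1 - Z i ω) * (⨅ j, X i j ω))
    (R : Fin m → ℝ)
    (hR : ∀ i, R i = ζ * (∑ j ∈ Finset.Icc 1 (k i), (1 : ℝ) / j) + (1 - ζ) / (k i)) :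
    (∀ i, (∫ ω, Y i ω ∂ℙ) =
      lam * (ζ * (∑ j ∈ Finset.Icc 1 (k i), (1 : ℝ) / j) + (1 - ζ) / (k i))) ∧
    (∫ ω, (1 / (m : ℝ)) * ∑ i, Y i ω / R i ∂ℙ) = lam := by
  -- per-index expectations
  have hmain : ∀ i, Integrable (Y i) ℙ ∧ (∫ ω, Y i ω ∂ℙ) =
      lam * (ζ * (∑ j ∈ Finset.Icc 1 (k i), (1 : ℝ) / j) + (1 - ζ) / (k i)) := by
    intro i
    haveI : Nonempty (Fin (k i)) := Fin.pos_iff_nonempty.mp (hk i)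
    obtain ⟨hMint, hMval⟩ := RNSaux.max_exp lam hlam (k i) (hk i) (X i)
      (hmeas i) (hindep i) (hexp i)
    obtain ⟨hNint, hNval⟩ := RNSaux.min_exp lam hlam (k i) (hk i) (X i)
      (hmeas i) (hindep i) (hexp i)
    -- measurability of sup/inf maps on the product
    have hSmeas : Measurable (fun v : Fin (k i) → ℝ => ⨆ j, v j) := by
      have h1 : (fun v : Fin (k i) → ℝ => ⨆ j, v j)
          = fun v => Finset.univ.sup' Finset.univ_nonempty (fun j => v j) :=
        funext fun v => (Finset.sup'_univ_eq_ciSup _).symm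
      have h2 : (fun v : Fin (k i) → ℝ => Finset.univ.sup' Finset.univ_nonempty (fun j => v j))
          = Finset.univ.sup' Finset.univ_nonempty (fun j (v : Fin (k i) → ℝ) => v j) :=
        funext fun v => (Finset.sup'_apply Finset.univ_nonempty
          (fun j (v : Fin (k i) → ℝ) => v j) v).symm
      rw [h1, h2]
      exact Finset.measurable_sup' _ (fun j _ => measurable_pi_apply j)
    have hImeas : Measurable (fun v : Fin (k i) → ℝ => ⨅ j, v j) := by
      have h1 : (fun v : Fin (k i) → ℝ => ⨅ j, v j)
          = fun v => Finset.univ.inf' Finset.univ_nonempty (fun j => v j) :=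
        funext fun v => (Finset.inf'_univ_eq_ciInf _).symm
      have h2 : (fun v : Fin (k i) → ℝ => Finset.univ.inf' Finset.univ_nonempty (fun j => v j))
          = Finset.univ.inf' Finset.univ_nonempty (fun j (v : Fin (k i) → ℝ) => v j) :=
        funext fun v => (Finset.inf'_apply Finset.univ_nonempty
          (fun j (v : Fin (k i) → ℝ) => v j) v).symm
      rw [h1, h2]
      exact Finset.inf'_induction _ _ (fun _f hf _g hg => hf.inf hg)
        fun j _ => measurable_pi_apply j
    -- independence of Z i with sup and inf
    have hindZM : IndepFun (Z i) (fun ω => ⨆ j, X i j ω) ℙ :=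
      (hZindep i).comp measurable_id hSmeas
    have hindZN : IndepFun (fun ω => 1 - Z i ω) (fun ω => ⨅ j, X i j ω) ℙ :=
      (hZindep i).comp (measurable_const.sub measurable_id) hImeas
    -- Z values/means
    have hZset : MeasurableSet {ω | Z i ω = 1} :=
      (hZmeas i) (measurableSet_singleton 1)
    have hZind : Z i = Set.indicator {ω | Z i ω = 1} (fun _ => (1:ℝ)) := by
      funext ω
      rcases hZrange i ω with h | h
      · rw [h, Set.indicator_of_notMem (by simp [Set.mem_setOf_eq, h])]
      · rw [h, Set.indicator_of_mem (by simp [Set.mem_setOf_eq, h])]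
    have hZint : Integrable (Z i) ℙ := by
      rw [hZind]
      exact (integrable_const (1:ℝ)).indicator hZset
    have hZmean : ∫ ω, Z i ω ∂ℙ = ζ := by
      rw [show (fun ω => Z i ω) = Z i from rfl, hZind, integral_indicator_const _ hZset,
        measureReal_def, hZber i]
      simp
    have hZ1int : Integrable (fun ω => 1 - Z i ω) ℙ := (integrable_const 1).sub hZint
    have hZ1mean : ∫ ω, (1 - Z i ω) ∂ℙ = 1 - ζ := by
      rw [integral_sub (integrable_const 1) hZint, integral_const, hZmean]
      simp
    -- boundedness
    have hZbd : ∃ C, ∀ ω, ‖Z i ω‖ ≤ C := ⟨1, fun ω => by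
      rcases hZrange i ω with h | h <;> simp [h]⟩
    have hZ1bd : ∃ C, ∀ ω, ‖1 - Z i ω‖ ≤ C := ⟨1, fun ω => by
      rcases hZrange i ω with h | h <;> simp [h]⟩
    -- products
    have hZMint : Integrable (fun ω => Z i ω * (⨆ j, X i j ω)) ℙ :=
      hMint.bdd_mul (hZmeas i).aestronglyMeasurable (ae_of_all _ hZbd.choose_spec)
    have hZNint : Integrable (fun ω => (1 - Z i ω) * (⨅ j, X i j ω)) ℙ :=
      hNint.bdd_mul (measurable_const.sub (hZmeas i)).aestronglyMeasurable (ae_of_all _ hZ1bd.choose_spec)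
    have hZMval : ∫ ω, Z i ω * (⨆ j, X i j ω) ∂ℙ
        = ζ * (lam * ∑ j ∈ Finset.Icc 1 (k i), (1:ℝ)/j) := by
      have := hindZM.integral_mul_eq_mul_integral (hZmeas i).aestronglyMeasurable
        hMint.aestronglyMeasurable
      calc ∫ ω, Z i ω * (⨆ j, X i j ω) ∂ℙ
          = ∫ ω, (Z i * fun ω => ⨆ j, X i j ω) ω ∂ℙ := rfl
        _ = (∫ ω, Z i ω ∂ℙ) * ∫ ω, ⨆ j, X i j ω ∂ℙ := this
        _ = ζ * (lam * ∑ j ∈ Finset.Icc 1 (k i), (1:ℝ)/j) := by rw [hZmean, hMval]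
    have hZNval : ∫ ω, (1 - Z i ω) * (⨅ j, X i j ω) ∂ℙ = (1 - ζ) * (lam / k i) := by
      have := hindZN.integral_mul_eq_mul_integral (measurable_const.sub (hZmeas i)).aestronglyMeasurable
        hNint.aestronglyMeasurable
      calc ∫ ω, (1 - Z i ω) * (⨅ j, X i j ω) ∂ℙ
          = ∫ ω, ((fun ω => 1 - Z i ω) * fun ω => ⨅ j, X i j ω) ω ∂ℙ := rfl
        _ = (∫ ω, (1 - Z i ω) ∂ℙ) * ∫ ω, ⨅ j, X i j ω ∂ℙ := this
        _ = (1 - ζ) * (lam / k i) := by rw [hZ1mean, hNval]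
    have hYeq : Y i = fun ω => Z i ω * (⨆ j, X i j ω) + (1 - Z i ω) * (⨅ j, X i j ω) :=
      funext fun ω => hY i ω
    constructor
    · rw [hYeq]; exact hZMint.add hZNint
    · rw [hYeq, integral_add hZMint hZNint, hZMval, hZNval]
      ring
  refine ⟨fun i => (hmain i).2, ?_⟩
  -- positivity of R
  have hRpos : ∀ i, 0 < R i := by
    intro i
    have hki : (0:ℝ) < k i := by exact_mod_cast hk i
    have hHk : (1:ℝ) / k i ≤ ∑ j ∈ Finset.Icc 1 (k i), (1:ℝ)/j := by
      refine Finset.single_le_sum (f := fun j : ℕ => (1:ℝ)/j) (fun j _ => by positivity) ?_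
      exact Finset.mem_Icc.mpr ⟨hk i, le_rfl⟩
    rw [hR i]
    have h2 : ζ * (1/(k i:ℝ)) ≤ ζ * ∑ j ∈ Finset.Icc 1 (k i), (1:ℝ)/j :=
      mul_le_mul_of_nonneg_left hHk hζ.1
    have h3 : (0:ℝ) < 1/(k i:ℝ) := one_div_pos.mpr hki
    have h4 : (1 - ζ)/(k i:ℝ) = 1/(k i:ℝ) - ζ * (1/(k i:ℝ)) := by ring
    linarith
  have hYint : ∀ i, Integrable (fun ω => Y i ω / R i) ℙ := fun i => (hmain i).1.div_const _
  have hμY : ∀ i, ∫ ω, Y i ω / R i ∂ℙ = lam := by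
    intro i
    rw [integral_div, (hmain i).2, ← hR i, mul_div_assoc, div_self (hRpos i).ne', mul_one]
  calc ∫ ω, (1 / (m : ℝ)) * ∑ i, Y i ω / R i ∂ℙ
      = (1 / (m : ℝ)) * ∫ ω, ∑ i, Y i ω / R i ∂ℙ := by
        rw [integral_const_mul]
    _ = (1 / (m : ℝ)) * ∑ i, ∫ ω, Y i ω / R i ∂ℙ := by
        rw [integral_finset_sum _ (fun i _ => hYint i)]
    _ = (1 / (m : ℝ)) * ∑ i : Fin m, lam := by
        rw [Finset.sum_congr rfl (fun i _ => hμY i)]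
    _ = lam := by
        rw [Finset.sum_const, Finset.card_univ, Fintype.card_fin]
        have hm0 : (m:ℝ) ≠ 0 := by positivity
        field_simp
        rw [nsmul_eq_mul]
end

section
/- In the PRHR model F(x) = F0(x)^{1/γ}, if Y is an RNS observation with known set size k and Bernoulli(ζ) max/min indicator, then E[−log F0(Y)] = γ·((1−ζ)·Σ_{j=1}^{k} 1/j + ζ/k), so the MM estimator −(1/m)Σ (log F0(Yi))/Ri with Ri = (1−ζ)·Σ_{j=1}^{ki} 1/j + ζ/ki is unbiased for γ. -/
open MeasureTheory ProbabilityTheory Real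
open Set

lemma aux_term_integrable (n : ℕ) :
    IntegrableOn (fun t : ℝ => (1 - Real.exp (-t)) ^ n * Real.exp (-t)) (Set.Ioi 0) := by
  have h := exp_neg_integrableOn_Ioi 0 (one_pos)
  refine h.mono' ?_ ?_
  · exact ((continuous_const.sub (Real.continuous_exp.comp continuous_neg)).pow n
      |>.mul (Real.continuous_exp.comp continuous_neg)).aestronglyMeasurable
  · filter_upwards [ae_restrict_mem measurableSet_Ioi] with t ht
    have h0 : 0 ≤ Real.exp (-t) := (Real.exp_pos _).le
    have h1 : Real.exp (-t) ≤ 1 := by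
      rw [Real.exp_le_one_iff]; linarith [le_of_lt (mem_Ioi.mp ht)]
    have h2 : (0:ℝ) ≤ 1 - Real.exp (-t) := by linarith
    have h3 : (1 - Real.exp (-t)) ^ n ≤ 1 := pow_le_one₀ h2 (by linarith)
    rw [Real.norm_eq_abs, abs_of_nonneg (by positivity)]
    calc (1 - Real.exp (-t)) ^ n * Real.exp (-t) ≤ 1 * Real.exp (-t) := by
          exact mul_le_mul_of_nonneg_right h3 h0
      _ = Real.exp (-1 * t) := by rw [one_mul]; ring_nf

lemma aux_term_integral (n : ℕ) :
    ∫ t in Set.Ioi 0, (1 - Real.exp (-t)) ^ n * Real.exp (-t) = 1 / (n + 1) := by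
  have hderiv : ∀ t ∈ Set.Ici (0:ℝ),
      HasDerivAt (fun t : ℝ => (1 - Real.exp (-t)) ^ (n+1) / (n+1))
        ((1 - Real.exp (-t)) ^ n * Real.exp (-t)) t := by
    intro t _
    have h1 : HasDerivAt (fun t : ℝ => 1 - Real.exp (-t)) (Real.exp (-t)) t := by
      have := ((Real.hasDerivAt_exp (-t)).comp t (hasDerivAt_neg t)).const_sub 1
      simpa using this
    have h2 := (h1.pow (n+1)).div_const ((n:ℝ)+1)
    refine h2.congr_deriv ?_
    simp only [Nat.add_sub_cancel]
    push_cast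
    field_simp
  have htend : Filter.Tendsto (fun t : ℝ => (1 - Real.exp (-t)) ^ (n+1) / (n+1))
      Filter.atTop (nhds (1 / (n+1))) := by
    have h1 : Filter.Tendsto (fun t : ℝ => 1 - Real.exp (-t)) Filter.atTop (nhds 1) := by
      have := Real.tendsto_exp_neg_atTop_nhds_zero
      simpa using (tendsto_const_nhds (x := (1:ℝ))).sub this
    have := ((h1.pow (n+1)).div_const ((n:ℝ)+1))
    simpa using this
  have := integral_Ioi_of_hasDerivAt_of_tendsto' hderiv (aux_term_integrable n) htend
  rw [this]
  simp

lemma aux_harmonic (n : ℕ) :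
    IntegrableOn (fun t : ℝ => 1 - (1 - Real.exp (-t)) ^ n) (Set.Ioi 0) ∧
    ∫ t in Set.Ioi 0, (1 - (1 - Real.exp (-t)) ^ n) = ∑ j ∈ Finset.Icc 1 n, (1:ℝ)/j := by
  induction n with
  | zero => simp
  | succ n ih =>
    have hfun : (fun t : ℝ => 1 - (1 - Real.exp (-t)) ^ (n+1)) =
        (fun t : ℝ => 1 - (1 - Real.exp (-t)) ^ n) +
        (fun t : ℝ => (1 - Real.exp (-t)) ^ n * Real.exp (-t)) := by
      funext t; simp only [Pi.add_apply]; ring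
    have hint : IntegrableOn (fun t : ℝ => 1 - (1 - Real.exp (-t)) ^ (n+1)) (Set.Ioi 0) := by
      rw [hfun]; exact ih.1.add (aux_term_integrable n)
    refine ⟨hint, ?_⟩
    have hI : ∫ t in Set.Ioi 0, (1 - (1 - Real.exp (-t)) ^ (n+1)) =
        ∫ t in Set.Ioi 0, ((1 - (1 - Real.exp (-t)) ^ n) +
          (1 - Real.exp (-t)) ^ n * Real.exp (-t)) := by
      apply integral_congr_ae; filter_upwards with t; ring
    rw [hI, integral_add ih.1 (aux_term_integrable n), ih.2, aux_term_integral n,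
      Finset.sum_Icc_succ_top (by omega : 1 ≤ n + 1)]
    push_cast
    ring

lemma aux_exp_pow_integrable (n : ℕ) (hn : 1 ≤ n) :
    IntegrableOn (fun t : ℝ => Real.exp (-t) ^ n) (Set.Ioi 0) := by
  refine (exp_neg_integrableOn_Ioi 0 one_pos).mono' ?_ ?_
  · exact ((Real.continuous_exp.comp continuous_neg).pow n).aestronglyMeasurable
  · filter_upwards [ae_restrict_mem measurableSet_Ioi] with t ht
    have h0 : (0:ℝ) < Real.exp (-t) := Real.exp_pos _
    have h1 : Real.exp (-t) ≤ 1 := by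
      rw [Real.exp_le_one_iff]; linarith [le_of_lt (mem_Ioi.mp ht)]
    rw [Real.norm_eq_abs, abs_of_nonneg (by positivity)]
    calc Real.exp (-t) ^ n ≤ Real.exp (-t) ^ 1 :=
          pow_le_pow_of_le_one h0.le h1 hn
      _ = Real.exp (-1 * t) := by ring_nf

lemma aux_exp_pow_integral (n : ℕ) (hn : 1 ≤ n) :
    ∫ t in Set.Ioi 0, Real.exp (-t) ^ n = 1 / n := by
  obtain ⟨m, rfl⟩ : ∃ m, n = m + 1 := ⟨n - 1, by omega⟩
  have hderiv : ∀ t ∈ Set.Ici (0:ℝ),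
      HasDerivAt (fun t : ℝ => -(Real.exp (-t) ^ (m+1)) / ((m+1:ℕ):ℝ)) (Real.exp (-t) ^ (m+1)) t := by
    intro t _
    have h1 : HasDerivAt (fun t : ℝ => Real.exp (-t)) (-Real.exp (-t)) t := by
      have := (Real.hasDerivAt_exp (-t)).comp t (hasDerivAt_neg t)
      simpa [Function.comp_def] using this
    have h2 := ((h1.pow (m+1)).neg).div_const (((m+1:ℕ)) : ℝ)
    refine h2.congr_deriv ?_
    have hn0 : ((m:ℝ)+1) ≠ 0 := by positivity
    simp only [Nat.add_sub_cancel]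
    push_cast
    field_simp
    ring
  have htend : Filter.Tendsto (fun t : ℝ => -(Real.exp (-t) ^ (m+1)) / ((m+1:ℕ):ℝ))
      Filter.atTop (nhds 0) := by
    have h1 : Filter.Tendsto (fun t : ℝ => Real.exp (-t)) Filter.atTop (nhds 0) := by
      simpa using Real.tendsto_exp_neg_atTop_nhds_zero
    have := ((h1.pow (m+1)).neg).div_const ((m+1:ℕ):ℝ)
    simpa using this
  have := integral_Ioi_of_hasDerivAt_of_tendsto' hderiv (aux_exp_pow_integrable (m+1) hn) htend
  rw [this]
  rw [neg_div]
  push_cast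
  norm_num

section
variable {Ω : Type*} [MeasureSpace Ω] [IsProbabilityMeasure (ℙ : Measure Ω)]

lemma core (γ : ℝ) (hγ : 0 < γ) (ζ : ℝ) (hζ : ζ ∈ Set.Icc (0:ℝ) 1)
    (F0 : ℝ → ℝ) (hF0mono : Monotone F0) (hF0cont : Continuous F0)
    (hF0bot : Filter.Tendsto F0 Filter.atBot (nhds 0))
    (hF0top : Filter.Tendsto F0 Filter.atTop (nhds 1))
    (n : ℕ) (hn : 1 ≤ n)
    (X : Fin n → Ω → ℝ) (hmeas : ∀ j, Measurable (X j))
    (hindep : iIndepFun X ℙ)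
    (hcdf : ∀ j x, (ℙ {ω | X j ω ≤ x}).toReal = (F0 x) ^ (1/γ))
    (Z : Ω → ℝ) (hZmeas : Measurable Z) (hZrange : ∀ ω, Z ω = 0 ∨ Z ω = 1)
    (hZber : (ℙ {ω | Z ω = 1}).toReal = ζ)
    (hZindep : IndepFun Z (fun ω => (fun j => X j ω)) ℙ)
    (Y : Ω → ℝ) (hY : ∀ ω, Y ω = Z ω * (⨆ j, X j ω) + (1 - Z ω) * (⨅ j, X j ω)) :
    Integrable (fun ω => Real.log (F0 (Y ω))) ℙ ∧
    (∫ ω, -Real.log (F0 (Y ω)) ∂ℙ) =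
      γ * ((1-ζ) * (∑ j ∈ Finset.Icc 1 n, (1:ℝ)/j) + ζ/(n:ℝ)) := by
  haveI : NeZero n := ⟨by omega⟩
  have hne : (Finset.univ : Finset (Fin n)).Nonempty := Finset.univ_nonempty
  have hγinv : 0 < 1/γ := by positivity
  have hF0nonneg : ∀ x, 0 ≤ F0 x := fun x => hF0mono.le_of_tendsto hF0bot x
  have hF0le1 : ∀ x, F0 x ≤ 1 := fun x => hF0mono.ge_of_tendsto hF0top x
  set G : ℝ → ℝ := fun x => (F0 x) ^ (1/γ) with hGdef
  have hGnonneg : ∀ x, 0 ≤ G x := fun x => Real.rpow_nonneg (hF0nonneg x) _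
  have hGle1 : ∀ x, G x ≤ 1 := fun x => Real.rpow_le_one (hF0nonneg x) (hF0le1 x) hγinv.le
  have hGmono : Monotone G := fun a b hab =>
    Real.rpow_le_rpow (hF0nonneg a) (hF0mono hab) hγinv.le
  have hGcont : Continuous G := by
    rw [continuous_iff_continuousAt]
    exact fun x => (Real.continuousAt_rpow_const (F0 x) (1/γ) (Or.inr hγinv.le)).comp
      hF0cont.continuousAt
  have hGbot : Filter.Tendsto G Filter.atBot (nhds 0) := by
    have h2 : Filter.Tendsto (fun x => F0 x ^ (1/γ)) Filter.atBot (nhds ((0:ℝ) ^ (1/γ))) :=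
      (Real.continuousAt_rpow_const 0 (1/γ) (Or.inr hγinv.le)).tendsto.comp hF0bot
    rwa [Real.zero_rpow (ne_of_gt hγinv)] at h2
  have hGtop : Filter.Tendsto G Filter.atTop (nhds 1) := by
    have h2 : Filter.Tendsto (fun x => F0 x ^ (1/γ)) Filter.atTop (nhds ((1:ℝ) ^ (1/γ))) :=
      (Real.continuousAt_rpow_const 1 (1/γ) (Or.inr hγinv.le)).tendsto.comp hF0top
    rwa [Real.one_rpow] at h2
  have hcdfG : ∀ j x, ℙ {ω | X j ω ≤ x} = ENNReal.ofReal (G x) := by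
    intro j x
    rw [← ENNReal.ofReal_toReal (measure_ne_top ℙ {ω | X j ω ≤ x}), hcdf j x]
  have hsurj : ∀ u ∈ Set.Ioo (0:ℝ) 1, ∃ x, G x = u := by
    intro u hu
    obtain ⟨a, ha⟩ := (hGbot.eventually_lt_const hu.1).exists
    obtain ⟨b, hb⟩ := (hGtop.eventually_const_lt hu.2).exists
    exact intermediate_value_univ a b hGcont ⟨ha.le, hb.le⟩
  -- single-variable tail probabilities
  have hsingle : ∀ (j : Fin n), ∀ u ∈ Set.Ioo (0:ℝ) 1,
      ℙ {ω | G (X j ω) < u} = ENNReal.ofReal u := by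
    intro j u hu
    obtain ⟨x, hx⟩ := hsurj u hu
    have hupper : ℙ {ω | G (X j ω) < u} ≤ ENNReal.ofReal u := by
      have hsub : {ω | G (X j ω) < u} ⊆ {ω | X j ω < x} := by
        intro ω h
        simp only [mem_setOf_eq] at h ⊢
        by_contra hc
        push_neg at hc
        exact absurd (hx ▸ hGmono hc) (not_le.mpr h)
      have hun : {ω | X j ω < x} = ⋃ q : ℕ, {ω | X j ω ≤ x - ((q:ℝ)+1)⁻¹} := by
        ext ω
        simp only [mem_setOf_eq, mem_iUnion]
        constructor
        · intro h
          obtain ⟨q, hq⟩ := exists_nat_one_div_lt (sub_pos.mpr h)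
          exact ⟨q, by rw [one_div] at hq; linarith⟩
        · rintro ⟨q, hq⟩
          have : (0:ℝ) < ((q:ℝ)+1)⁻¹ := by positivity
          linarith
      calc ℙ {ω | G (X j ω) < u} ≤ ℙ {ω | X j ω < x} := measure_mono hsub
        _ ≤ ENNReal.ofReal u := by
            rw [hun]
            have hmonoS : Monotone (fun q : ℕ => {ω | X j ω ≤ x - ((q:ℝ)+1)⁻¹}) := by
              intro p q hpq ω hw
              simp only [mem_setOf_eq] at hw ⊢
              have hle : ((q:ℝ)+1)⁻¹ ≤ ((p:ℝ)+1)⁻¹ := by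
                apply inv_anti₀ (by positivity)
                have := (Nat.cast_le (α := ℝ)).mpr hpq
                linarith
              linarith
            refine (hmonoS.directed_le.measure_iUnion).trans_le (iSup_le fun q => ?_)
            rw [hcdfG]
            apply ENNReal.ofReal_le_ofReal
            rw [← hx]
            apply hGmono
            have : (0:ℝ) < ((q:ℝ)+1)⁻¹ := by positivity
            linarith
    refine le_antisymm hupper ?_
    have htendsto : Filter.Tendsto (fun v : ℝ => ENNReal.ofReal v) (nhdsWithin u (Set.Iio u))
        (nhds (ENNReal.ofReal u)) :=
      (ENNReal.continuous_ofReal.tendsto u).mono_left nhdsWithin_le_nhds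
    refine le_of_tendsto htendsto ?_
    filter_upwards [Ioo_mem_nhdsLT_of_mem (⟨hu.1, le_refl u⟩ : u ∈ Set.Ioc 0 u)] with v hv
    obtain ⟨xv, hxv⟩ := hsurj v ⟨hv.1, hv.2.trans hu.2⟩
    have hsub2 : {ω | X j ω ≤ xv} ⊆ {ω | G (X j ω) < u} := by
      intro ω h
      exact lt_of_le_of_lt (hxv ▸ hGmono h) hv.2
    calc ENNReal.ofReal v = ℙ {ω | X j ω ≤ xv} := by rw [hcdfG, hxv]
      _ ≤ _ := measure_mono hsub2
  -- complement single tail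
  have hmeasGlt : ∀ (j : Fin n) (u : ℝ), MeasurableSet {ω | G (X j ω) < u} :=
    fun j u => (hmeas j) (hGcont.measurable measurableSet_Iio)
  have hsingle_ge : ∀ (j : Fin n), ∀ u ∈ Set.Ioo (0:ℝ) 1,
      ℙ {ω | u ≤ G (X j ω)} = ENNReal.ofReal (1-u) := by
    intro j u hu
    have hcompl : {ω | u ≤ G (X j ω)} = {ω | G (X j ω) < u}ᶜ := by
      ext ω; simp [not_lt]
    rw [hcompl, measure_compl (hmeasGlt j u) (measure_ne_top _ _), hsingle j u hu,
      measure_univ, ← ENNReal.ofReal_one, ← ENNReal.ofReal_sub _ hu.1.le]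
  -- product tails
  have hprodlt : ∀ u ∈ Set.Ioo (0:ℝ) 1,
      ℙ (⋂ j, {ω | G (X j ω) < u}) = ENNReal.ofReal (u^n) := by
    intro u hu
    have := hindep.meas_iInter (s := fun j => {ω | G (X j ω) < u})
      (fun j => ⟨G ⁻¹' Set.Iio u, hGcont.measurable measurableSet_Iio, rfl⟩)
    rw [this]
    simp only [hsingle _ u hu, Finset.prod_const, Finset.card_univ, Fintype.card_fin]
    rw [← ENNReal.ofReal_pow hu.1.le]
  have hprodge : ∀ u ∈ Set.Ioo (0:ℝ) 1,
      ℙ (⋂ j, {ω | u ≤ G (X j ω)}) = ENNReal.ofReal ((1-u)^n) := by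
    intro u hu
    have := hindep.meas_iInter (s := fun j => {ω | u ≤ G (X j ω)})
      (fun j => ⟨G ⁻¹' Set.Ici u, hGcont.measurable measurableSet_Ici, rfl⟩)
    rw [this]
    simp only [hsingle_ge _ u hu, Finset.prod_const, Finset.card_univ, Fintype.card_fin]
    rw [← ENNReal.ofReal_pow (by linarith [hu.2] : (0:ℝ) ≤ 1 - u)]
  -- pointwise sup/inf characterizations
  have hsup_iff : ∀ (v : Fin n → ℝ) (u : ℝ), (G (⨆ j, v j) < u ↔ ∀ j, G (v j) < u) := by
    intro v u
    obtain ⟨j0, hj0⟩ := Finite.exists_max v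
    have hsup : (⨆ j, v j) = v j0 :=
      le_antisymm (ciSup_le hj0) (le_ciSup (Set.Finite.bddAbove (Set.finite_range v)) j0)
    constructor
    · intro h j
      exact lt_of_le_of_lt (hGmono (hj0 j)) (hsup ▸ h)
    · intro h
      rw [hsup]; exact h j0
  have hinf_iff : ∀ (v : Fin n → ℝ) (u : ℝ), (u ≤ G (⨅ j, v j) ↔ ∀ j, u ≤ G (v j)) := by
    intro v u
    obtain ⟨j0, hj0⟩ := Finite.exists_min v
    have hinf : (⨅ j, v j) = v j0 :=
      le_antisymm (ciInf_le (Set.Finite.bddBelow (Set.finite_range v)) j0) (le_ciInf hj0)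
    constructor
    · intro h j
      exact le_trans (hinf ▸ h) (hGmono (hj0 j))
    · intro h
      rw [hinf]; exact h j0
  -- Z events
  have hζ0 : (0:ℝ) ≤ ζ := hζ.1
  have hζ1 : ζ ≤ 1 := hζ.2
  have hZ1set : {ω | Z ω = 1} = Z ⁻¹' {(1:ℝ)} := by ext ω; simp
  have hPZ1 : ℙ (Z ⁻¹' {(1:ℝ)}) = ENNReal.ofReal ζ := by
    rw [← hZ1set, ← ENNReal.ofReal_toReal (measure_ne_top ℙ _), hZber]
  have hZ0compl : Z ⁻¹' {(0:ℝ)} = (Z ⁻¹' {(1:ℝ)})ᶜ := by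
    ext ω
    rcases hZrange ω with h | h <;> simp [h]
  have hPZ0 : ℙ (Z ⁻¹' {(0:ℝ)}) = ENNReal.ofReal (1-ζ) := by
    rw [hZ0compl, measure_compl (hZmeas (measurableSet_singleton _)) (measure_ne_top _ _),
      measure_univ, hPZ1, ← ENNReal.ofReal_one, ← ENNReal.ofReal_sub _ hζ0]
  -- vector function and target sets
  set vec : Ω → (Fin n → ℝ) := fun ω => fun j => X j ω with hvec
  have hvecmeas : Measurable vec := measurable_pi_lambda _ (fun j => hmeas j)
  have htail : ∀ u ∈ Set.Ioo (0:ℝ) 1,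
      ℙ {ω | G (Y ω) < u} = ENNReal.ofReal (ζ * u^n + (1-ζ) * (1-(1-u)^n)) := by
    intro u hu
    set Bsup : Set (Fin n → ℝ) := ⋂ j, (fun v : Fin n → ℝ => v j) ⁻¹' (G ⁻¹' Set.Iio u)
      with hBsup
    set Binf : Set (Fin n → ℝ) := (⋂ j, (fun v : Fin n → ℝ => v j) ⁻¹' (G ⁻¹' Set.Ici u))ᶜ
      with hBinf
    have hBsupm : MeasurableSet Bsup :=
      MeasurableSet.iInter fun j => (measurable_pi_apply j) (hGcont.measurable measurableSet_Iio)
    have hBinfm : MeasurableSet Binf :=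
      (MeasurableSet.iInter fun j =>
        (measurable_pi_apply j) (hGcont.measurable measurableSet_Ici)).compl
    have hBsuppre : vec ⁻¹' Bsup = ⋂ j, {ω | G (X j ω) < u} := by
      ext ω; simp [hBsup, hvec]
    have hBinfpre : vec ⁻¹' Binf = (⋂ j, {ω | u ≤ G (X j ω)})ᶜ := by
      ext ω; simp [hBinf, hvec]
    have hsplit : {ω | G (Y ω) < u} =
        (Z ⁻¹' {(1:ℝ)} ∩ vec ⁻¹' Bsup) ∪ (Z ⁻¹' {(0:ℝ)} ∩ vec ⁻¹' Binf) := by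
      ext ω
      simp only [mem_union, mem_inter_iff, mem_preimage, mem_singleton_iff, hBsup, hBinf,
        mem_iInter, mem_setOf_eq, mem_compl_iff, mem_Iio, mem_Ici, hvec, not_forall, not_le]
      rcases hZrange ω with h0 | h1
      · have hYω : Y ω = ⨅ j, X j ω := by rw [hY ω, h0]; ring
        rw [hYω]
        constructor
        · intro h
          right
          refine ⟨h0, ?_⟩
          have := not_le.mpr h
          rw [hinf_iff] at this
          push_neg at this
          exact this
        · rintro (⟨h1', _⟩ | ⟨_, j, hj⟩)
          · rw [h0] at h1'; norm_num at h1'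
          · by_contra hc
            push_neg at hc
            rw [hinf_iff] at hc
            exact absurd (hc j) (not_le.mpr hj)
      · have hYω : Y ω = ⨆ j, X j ω := by rw [hY ω, h1]; ring
        rw [hYω]
        constructor
        · intro h
          left
          exact ⟨h1, (hsup_iff _ u).mp h⟩
        · rintro (⟨_, h⟩ | ⟨h0', _⟩)
          · exact (hsup_iff _ u).mpr h
          · rw [h1] at h0'; norm_num at h0'
    have hdisj : Disjoint (Z ⁻¹' {(1:ℝ)} ∩ vec ⁻¹' Bsup) (Z ⁻¹' {(0:ℝ)} ∩ vec ⁻¹' Binf) := by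
      refine Set.disjoint_left.mpr ?_
      rintro ω ⟨h1, _⟩ ⟨h0, _⟩
      simp only [mem_preimage, mem_singleton_iff] at h1 h0
      rw [h0] at h1; norm_num at h1
    rw [hsplit, measure_union hdisj ((hZmeas (measurableSet_singleton _)).inter
      (hvecmeas hBinfm)),
      hZindep.measure_inter_preimage_eq_mul _ _ (measurableSet_singleton _) hBsupm,
      hZindep.measure_inter_preimage_eq_mul _ _ (measurableSet_singleton _) hBinfm,
      hPZ1, hPZ0, hBsuppre, hBinfpre, hprodlt u hu]
    have hPcompl : ℙ ((⋂ j, {ω | u ≤ G (X j ω)})ᶜ) = 1 - ENNReal.ofReal ((1-u)^n) := by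
      rw [measure_compl (MeasurableSet.iInter fun j =>
        (show MeasurableSet {ω | u ≤ G (X j ω)} from
          (hmeas j) (hGcont.measurable measurableSet_Ici))) (measure_ne_top _ _),
        measure_univ, hprodge u hu]
    rw [hPcompl]
    have h1u : (0:ℝ) ≤ (1-u)^n := pow_nonneg (by linarith [hu.2]) n
    have h1u' : (1-u)^n ≤ 1 := pow_le_one₀ (by linarith [hu.2]) (by linarith [hu.1])
    have hun : (0:ℝ) ≤ u^n := pow_nonneg hu.1.le n
    rw [← ENNReal.ofReal_one, ← ENNReal.ofReal_sub _ h1u, ← ENNReal.ofReal_mul hζ0,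
      ← ENNReal.ofReal_mul (by linarith : (0:ℝ) ≤ 1-ζ),
      ← ENNReal.ofReal_add (mul_nonneg hζ0 hun)
        (mul_nonneg (by linarith) (by linarith [h1u']))]
  -- null sets
  have hXnull : ∀ j, ℙ {ω | G (X j ω) = 0} = 0 := by
    intro j
    have hb : ∀ q : ℕ, ℙ {ω | G (X j ω) = 0} ≤ ENNReal.ofReal (((q:ℝ)+2)⁻¹) := by
      intro q
      have hq0 : (0:ℝ) < (q:ℝ)+2 := by positivity
      have hu : ((q:ℝ)+2)⁻¹ ∈ Set.Ioo (0:ℝ) 1 := by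
        constructor
        · positivity
        · rw [inv_lt_one₀ hq0]
          have := Nat.cast_nonneg (α := ℝ) q
          linarith
      refine (measure_mono ?_).trans (le_of_eq (hsingle j _ hu))
      intro ω h
      simp only [mem_setOf_eq] at h ⊢
      rw [h]
      exact hu.1
    have hlim : Filter.Tendsto (fun q : ℕ => ENNReal.ofReal (((q:ℝ)+2)⁻¹))
        Filter.atTop (nhds 0) := by
      have h1 : Filter.Tendsto (fun q : ℕ => ((q:ℝ)+2)⁻¹) Filter.atTop (nhds 0) := by
        apply Filter.Tendsto.comp tendsto_inv_atTop_zero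
        exact Filter.tendsto_atTop_add_const_right _ 2 tendsto_natCast_atTop_atTop
      have := (ENNReal.continuous_ofReal.tendsto 0).comp h1
      simpa [Function.comp_def] using this
    exact le_zero_iff.mp (ge_of_tendsto hlim (Filter.Eventually.of_forall hb))
  have hattain : ∀ ω, ∃ j, Y ω = X j ω := by
    intro ω
    rcases hZrange ω with h0 | h1
    · obtain ⟨j0, hj0⟩ := Finite.exists_min (fun j => X j ω)
      refine ⟨j0, ?_⟩
      have hinf : (⨅ j, X j ω) = X j0 ω :=
        le_antisymm (ciInf_le (Set.Finite.bddBelow (Set.finite_range _)) j0) (le_ciInf hj0)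
      rw [hY ω, h0, hinf]; ring
    · obtain ⟨j0, hj0⟩ := Finite.exists_max (fun j => X j ω)
      refine ⟨j0, ?_⟩
      have hsup : (⨆ j, X j ω) = X j0 ω :=
        le_antisymm (ciSup_le hj0) (le_ciSup (f := fun j => X j ω) (Set.Finite.bddAbove (Set.finite_range _)) j0)
      rw [hY ω, h1, hsup]; ring
  have hYnull : ℙ {ω | G (Y ω) = 0} = 0 := by
    refine measure_mono_null ?_ (measure_iUnion_null fun j => hXnull j)
    intro ω h
    simp only [mem_setOf_eq] at h
    obtain ⟨j, hj⟩ := hattain ω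
    exact mem_iUnion.mpr ⟨j, by simp only [mem_setOf_eq]; rw [← hj]; exact h⟩
  -- measurability of Y
  have hsupm : Measurable (fun ω => ⨆ j, X j ω) := by
    have heq : (fun ω => ⨆ j, X j ω) =
        Finset.univ.sup' hne (fun j => X j) := by
      funext ω
      rw [← Finset.sup'_univ_eq_ciSup]
      rw [Finset.sup'_apply]
    rw [heq]
    exact Finset.measurable_sup' hne (fun j _ => hmeas j)
  have hinfm : Measurable (fun ω => ⨅ j, X j ω) := by
    have heq : (fun ω => ⨅ j, X j ω) =
        Finset.univ.inf' hne (fun j => X j) := by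
      funext ω
      rw [← Finset.inf'_univ_eq_ciInf]
      rw [Finset.inf'_apply]
    rw [heq]
    exact Finset.inf'_induction hne _ (fun f hf g hg => hf.inf hg) (fun j _ => hmeas j)
  have hYmeas : Measurable Y := by
    have : Y = fun ω => Z ω * (⨆ j, X j ω) + (1 - Z ω) * (⨅ j, X j ω) := funext hY
    rw [this]
    exact (hZmeas.mul hsupm).add ((measurable_const.sub hZmeas).mul hinfm)
  -- the normalized log variable
  set g : Ω → ℝ := fun ω => -Real.log (G (Y ω)) with hgdef
  have hgnn : ∀ ω, 0 ≤ g ω := fun ω =>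
    neg_nonneg.mpr (Real.log_nonpos (hGnonneg _) (hGle1 _))
  have hgmeas : Measurable g := (Real.measurable_log.comp (hGcont.measurable.comp hYmeas)).neg
  have htailg : ∀ t ∈ Set.Ioi (0:ℝ), ℙ {ω | t < g ω} =
      ENNReal.ofReal (ζ * Real.exp (-t)^n + (1-ζ) * (1-(1-Real.exp (-t))^n)) := by
    intro t ht
    have ht0 : (0:ℝ) < t := mem_Ioi.mp ht
    have hu : Real.exp (-t) ∈ Set.Ioo (0:ℝ) 1 :=
      ⟨Real.exp_pos _, Real.exp_lt_one_iff.mpr (by linarith)⟩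
    have hset : {ω | t < g ω} = {ω | G (Y ω) < Real.exp (-t)} \ {ω | G (Y ω) = 0} := by
      ext ω
      simp only [mem_setOf_eq, mem_diff, hgdef]
      constructor
      · intro h
        have hpos : 0 < G (Y ω) := by
          rcases (hGnonneg (Y ω)).lt_or_eq with hp | hp
          · exact hp
          · exfalso
            rw [← hp, Real.log_zero, neg_zero] at h
            linarith
        refine ⟨?_, ne_of_gt hpos⟩
        exact (Real.log_lt_iff_lt_exp hpos).mp (by linarith)
      · rintro ⟨h1, h2⟩
        have hpos : 0 < G (Y ω) := (hGnonneg _).lt_of_ne (Ne.symm h2)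
        have := (Real.log_lt_iff_lt_exp hpos).mpr h1
        linarith
    rw [hset, measure_diff_null hYnull, htail _ hu]
  -- integrability and value of tail function
  have hτint : IntegrableOn
      (fun t => ζ * Real.exp (-t)^n + (1-ζ)*(1-(1-Real.exp (-t))^n)) (Set.Ioi 0) :=
    ((aux_exp_pow_integrable n hn).const_mul ζ).add ((aux_harmonic n).1.const_mul (1-ζ))
  have hτval : ∫ t in Set.Ioi 0, (ζ * Real.exp (-t)^n + (1-ζ)*(1-(1-Real.exp (-t))^n)) =
      ζ*(1/(n:ℝ)) + (1-ζ)*(∑ j ∈ Finset.Icc 1 n, (1:ℝ)/j) := by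
    rw [integral_add ((aux_exp_pow_integrable n hn).const_mul ζ)
      ((aux_harmonic n).1.const_mul (1-ζ)), integral_const_mul, integral_const_mul,
      aux_exp_pow_integral n hn, (aux_harmonic n).2]
  have hτnn : ∀ t ∈ Set.Ioi (0:ℝ),
      0 ≤ ζ * Real.exp (-t)^n + (1-ζ)*(1-(1-Real.exp (-t))^n) := by
    intro t ht
    have ht0 : (0:ℝ) < t := mem_Ioi.mp ht
    have he0 : (0:ℝ) < Real.exp (-t) := Real.exp_pos _
    have he1 : Real.exp (-t) < 1 := Real.exp_lt_one_iff.mpr (by linarith)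
    have h1 : (0:ℝ) ≤ Real.exp (-t)^n := pow_nonneg he0.le n
    have h2 : (1-Real.exp (-t))^n ≤ 1 := pow_le_one₀ (by linarith) (by linarith)
    have := mul_nonneg hζ0 h1
    have := mul_nonneg (by linarith : (0:ℝ) ≤ 1-ζ) (by linarith : (0:ℝ) ≤ 1-(1-Real.exp (-t))^n)
    linarith
  -- lintegral via layer cake
  have hHnn : (0:ℝ) ≤ ∑ j ∈ Finset.Icc 1 n, (1:ℝ)/j :=
    Finset.sum_nonneg fun j _ => by positivity
  have hvalnn : (0:ℝ) ≤ ζ*(1/(n:ℝ)) + (1-ζ)*(∑ j ∈ Finset.Icc 1 n, (1:ℝ)/j) := by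
    have h1 : (0:ℝ) ≤ ζ*(1/(n:ℝ)) := by positivity
    have h2 : (0:ℝ) ≤ (1-ζ)*(∑ j ∈ Finset.Icc 1 n, (1:ℝ)/j) :=
      mul_nonneg (by linarith) hHnn
    linarith
  have hlint : ∫⁻ ω, ENNReal.ofReal (g ω) ∂ℙ =
      ENNReal.ofReal (ζ*(1/(n:ℝ)) + (1-ζ)*(∑ j ∈ Finset.Icc 1 n, (1:ℝ)/j)) := by
    rw [lintegral_eq_lintegral_meas_lt ℙ (Filter.Eventually.of_forall hgnn)
      hgmeas.aemeasurable]
    rw [setLIntegral_congr_fun measurableSet_Ioi htailg]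
    rw [← ofReal_integral_eq_lintegral_ofReal hτint
      ((ae_restrict_iff' measurableSet_Ioi).mpr (ae_of_all _ hτnn))]
    rw [hτval]
  have hgint : Integrable g ℙ :=
    ⟨hgmeas.aestronglyMeasurable,
      (hasFiniteIntegral_iff_ofReal (Filter.Eventually.of_forall hgnn)).mpr
        (by rw [hlint]; exact ENNReal.ofReal_lt_top)⟩
  have hgval : ∫ ω, g ω ∂ℙ =
      ζ*(1/(n:ℝ)) + (1-ζ)*(∑ j ∈ Finset.Icc 1 n, (1:ℝ)/j) := by
    rw [integral_eq_lintegral_of_nonneg_ae (Filter.Eventually.of_forall hgnn)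
      hgmeas.aestronglyMeasurable, hlint, ENNReal.toReal_ofReal hvalnn]
  -- relating log F0 and g
  have hlogeq : ∀ ω, Real.log (F0 (Y ω)) = -(γ * g ω) := by
    intro ω
    have hkey : Real.log (G (Y ω)) = (1/γ) * Real.log (F0 (Y ω)) := by
      rcases (hF0nonneg (Y ω)).lt_or_eq with hp | hp
      · exact Real.log_rpow hp _
      · show Real.log ((F0 (Y ω)) ^ (1/γ)) = _
        rw [← hp, Real.zero_rpow (ne_of_gt hγinv), Real.log_zero, mul_zero]
    rw [hgdef]
    simp only
    rw [hkey]
    field_simp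
  constructor
  · have heq : (fun ω => Real.log (F0 (Y ω))) = fun ω => -(γ * g ω) := funext hlogeq
    rw [heq]
    exact (hgint.const_mul γ).neg
  · have heq : (fun ω => -Real.log (F0 (Y ω))) = fun ω => γ * g ω :=
      funext fun ω => by rw [hlogeq ω]; ring
    rw [heq, integral_const_mul, hgval]
    ring

end

/-- In the PRHR model `F(x) = (F0 x)^(1/γ)`: if `Y i` is an RNS observation
with known set size `k i` and `Bernoulli(ζ)` max/min indicator, then
`E[-log F0 (Y i)] = γ ((1-ζ) Σ_{j=1}^{k i} 1/j + ζ/(k i))`, so the MM estimator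
`-(1/m) Σ log (F0 (Y i)) / R i`, with `R i = (1-ζ) Σ_{j=1}^{k i} 1/j + ζ/(k i)`,
is unbiased for `γ`. -/
theorem prhr_type1_mm_estimator
    {Ω : Type*} [MeasureSpace Ω] [IsProbabilityMeasure (ℙ : Measure Ω)]
    (m : ℕ) (hm : 1 ≤ m) (γ : ℝ) (hγ : 0 < γ)
    (ζ : ℝ) (hζ : ζ ∈ Set.Icc (0 : ℝ) 1)
    (F0 : ℝ → ℝ) (hF0mono : Monotone F0) (hF0cont : Continuous F0)
    (hF0bot : Filter.Tendsto F0 Filter.atBot (nhds 0))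
    (hF0top : Filter.Tendsto F0 Filter.atTop (nhds 1))
    (k : Fin m → ℕ) (hk : ∀ i, 1 ≤ k i)
    (X : (i : Fin m) → Fin (k i) → Ω → ℝ)
    (hmeas : ∀ i j, Measurable (X i j))
    (hindep : ∀ i, iIndepFun (X i) ℙ)
    (hcdf : ∀ i j x, (ℙ {ω | X i j ω ≤ x}).toReal = (F0 x) ^ (1 / γ))
    (Z : Fin m → Ω → ℝ) (hZmeas : ∀ i, Measurable (Z i))
    (hZrange : ∀ i ω, Z i ω = 0 ∨ Z i ω = 1)
    (hZber : ∀ i, (ℙ {ω | Z i ω = 1}).toReal = ζ)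
    (hZindep : ∀ i, IndepFun (Z i) (fun ω => (fun j => X i j ω)) ℙ)
    (Y : Fin m → Ω → ℝ)
    (hY : ∀ i ω, Y i ω = Z i ω * (⨆ j, X i j ω) + (1 - Z i ω) * (⨅ j, X i j ω))
    (R : Fin m → ℝ)
    (hR : ∀ i, R i = (1 - ζ) * (∑ j ∈ Finset.Icc 1 (k i), (1 : ℝ) / j) + ζ / (k i)) :
    (∀ i, (∫ ω, -Real.log (F0 (Y i ω)) ∂ℙ) =
      γ * ((1 - ζ) * (∑ j ∈ Finset.Icc 1 (k i), (1 : ℝ) / j) + ζ / (k i))) ∧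
    (∫ ω, -(1 / (m : ℝ)) * ∑ i, Real.log (F0 (Y i ω)) / R i ∂ℙ) = γ := by

  have hcore := fun i => core γ hγ ζ hζ F0 hF0mono hF0cont hF0bot hF0top (k i) (hk i)
    (X i) (hmeas i) (hindep i) (hcdf i) (Z i) (hZmeas i) (hZrange i) (hZber i)
    (hZindep i) (Y i) (hY i)
  have hpart1 : ∀ i, (∫ ω, -Real.log (F0 (Y i ω)) ∂ℙ) =
      γ * ((1 - ζ) * (∑ j ∈ Finset.Icc 1 (k i), (1 : ℝ) / j) + ζ / (k i)) :=
    fun i => (hcore i).2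
  refine ⟨hpart1, ?_⟩
  have hRpos : ∀ i, 0 < R i := by
    intro i
    rw [hR i]
    have hik : (0:ℝ) < (k i : ℝ) := by exact_mod_cast (hk i)
    have h1k : (0:ℝ) < 1/(k i:ℝ) := by positivity
    have h1k1 : 1/(k i:ℝ) ≤ 1 := by
      rw [div_le_one hik]; exact_mod_cast hk i
    have hH1 : (1:ℝ) ≤ ∑ j ∈ Finset.Icc 1 (k i), (1:ℝ)/j := by
      have := Finset.single_le_sum (f := fun j : ℕ => (1:ℝ)/j)
        (fun j _ => by positivity) (Finset.mem_Icc.mpr ⟨le_refl 1, hk i⟩)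
      simpa using this
    have hζk : ζ / (k i:ℝ) = ζ * (1/(k i:ℝ)) := by ring
    rw [hζk]
    nlinarith [mul_le_mul_of_nonneg_left hH1 (sub_nonneg.mpr hζ.2),
      mul_le_mul_of_nonneg_left h1k1 (sub_nonneg.mpr hζ.2), mul_nonneg hζ.1 h1k.le,
      mul_pos h1k (show (0:ℝ) < 1 by norm_num)]
  have hintlog : ∀ i, Integrable (fun ω => Real.log (F0 (Y i ω)) / R i) ℙ :=
    fun i => (hcore i).1.div_const (R i)
  have hlogval : ∀ i, (∫ ω, Real.log (F0 (Y i ω)) ∂ℙ) = -(γ * R i) := by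
    intro i
    have h := hpart1 i
    rw [integral_neg] at h
    rw [← hR i] at h
    linarith
  rw [integral_const_mul, integral_finset_sum _ (fun i _ => hintlog i)]
  have : ∀ i : Fin m, (∫ ω, Real.log (F0 (Y i ω)) / R i ∂ℙ) = -γ := by
    intro i
    rw [integral_div, hlogval i, neg_div, mul_div_assoc, div_self (hRpos i).ne', mul_one]
  rw [Finset.sum_congr rfl (fun i _ => this i), Finset.sum_const, Finset.card_univ,
    Fintype.card_fin]
  have hm0 : (m:ℝ) ≠ 0 := by
    have : (0:ℝ) < m := by exact_mod_cast hm
    linarith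
  rw [nsmul_eq_mul]
  field_simp
end
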